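/- arXiv:2202.09660 — 7 statements merged into one kernel-verified Lean document; each statement's English description precedes it below -/
import Mathlib

section
/- Let N be a positive integer, let p ∈ ℂ[z] be a polynomial of degree N, fix τ₀ ∈ ℂ, and for τ ∈ ℂ let q_τ = exp(((τ−τ₀)/(2N)) ∂²/∂z²) p. Suppose that for some σ ∈ ℂ the N roots of q_σ are distinct. Then there exist an open neighborhood V of σ in ℂ and holomorphic functions z_1, …, z_N : V → ℂ such that for every τ ∈ V one has q_τ(z) = (leading coefficient of p) · ∏_{j=1}^{N} (z − z_j(τ)), the values z_1(τ), …, z_N(τ) are pairwise distinct, and for every j and every τ ∈ V, z_j'(τ) = −(1/N) ∑_{k ≠ j} 1/(z_j(τ) − z_k(τ)). -/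
open Polynomial Finset

/-- The heat operator `exp((σ/(2N)) ∂²/∂z²)` applied to a polynomial, as a
terminating power series. -/
noncomputable def heatOp (N : ℕ) (σ : ℂ) (p : Polynomial ℂ) : Polynomial ℂ :=
  ∑ m ∈ Finset.range (p.natDegree + 1),
    ((σ / (2 * N)) ^ m / (Nat.factorial m : ℂ)) • Polynomial.derivative^[2 * m] p

namespace HeatAux

noncomputable def hc (N : ℕ) (τ₀ : ℂ) (m : ℕ) (τ : ℂ) : ℂ :=
  ((τ - τ₀) / (2 * N)) ^ m / (Nat.factorial m : ℂ)

noncomputable def hc' (N : ℕ) (τ₀ : ℂ) (m : ℕ) (τ : ℂ) : ℂ :=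
  ((m : ℂ) * ((τ - τ₀) / (2 * N)) ^ (m - 1) * ((1 - 0) / (2 * N))) / (Nat.factorial m : ℂ)

lemma hc_strict (N : ℕ) (τ₀ : ℂ) (m : ℕ) (τ : ℂ) :
    HasStrictDerivAt (hc N τ₀ m) (hc' N τ₀ m τ) τ := by
  have h1 : HasStrictDerivAt (fun τ : ℂ => (τ - τ₀) / (2 * N)) ((1 - 0) / (2 * N)) τ :=
    ((hasStrictDerivAt_id τ).sub (hasStrictDerivAt_const τ τ₀)).div_const _
  have h2 := ((hasStrictDerivAt_pow m ((τ - τ₀) / (2 * N))).comp τ h1).div_const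
    (Nat.factorial m : ℂ)
  exact h2

lemma heatOp_coeff_eq (N : ℕ) (σ : ℂ) (p : Polynomial ℂ) {k : ℕ} (hk : p.natDegree ≤ k) :
    (heatOp N σ p).coeff k = p.coeff k := by
  rw [heatOp, Polynomial.finset_sum_coeff]
  rw [Finset.sum_eq_single 0]
  · simp
  · intro m hm hm0
    rw [Polynomial.coeff_smul]
    have hz : (Polynomial.derivative^[2 * m] p).coeff k = 0 := by
      apply Polynomial.coeff_eq_zero_of_natDegree_lt
      have h1 : (Polynomial.derivative^[2 * m] p).natDegree ≤ p.natDegree - 2 * m :=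
        Polynomial.natDegree_iterate_derivative p (2 * m)
      have hm1 : 1 ≤ m := Nat.one_le_iff_ne_zero.2 hm0
      -- need p.natDegree - 2*m < k
      rcases Nat.eq_zero_or_pos p.natDegree with h0 | h0
      · -- then range (0+1) means m = 0, contradiction
        rw [h0] at hm
        simp at hm
        omega
      · omega
    rw [hz, smul_zero]
  · intro h
    simp at h

lemma heatOp_natDegree (N : ℕ) (σ : ℂ) {p : Polynomial ℂ} (hp : p ≠ 0) :
    (heatOp N σ p).natDegree = p.natDegree := by
  apply le_antisymm
  · rw [Polynomial.natDegree_le_iff_coeff_eq_zero]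
    intro k hk
    rw [heatOp_coeff_eq N σ p hk.le, Polynomial.coeff_eq_zero_of_natDegree_lt hk]
  · apply Polynomial.le_natDegree_of_ne_zero
    rw [heatOp_coeff_eq N σ p le_rfl, Polynomial.coeff_natDegree]
    exact Polynomial.leadingCoeff_ne_zero.2 hp

lemma heatOp_leadingCoeff (N : ℕ) (σ : ℂ) {p : Polynomial ℂ} (hp : p ≠ 0) :
    (heatOp N σ p).leadingCoeff = p.leadingCoeff := by
  rw [Polynomial.leadingCoeff, heatOp_natDegree N σ hp, heatOp_coeff_eq N σ p le_rfl,
    Polynomial.coeff_natDegree]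

lemma heatOp_eval (N : ℕ) (τ₀ : ℂ) (p : Polynomial ℂ) (τ y : ℂ) :
    eval y (heatOp N (τ - τ₀) p)
      = ∑ m ∈ Finset.range (p.natDegree + 1),
          hc N τ₀ m τ * eval y (Polynomial.derivative^[2 * m] p) := by
  rw [heatOp, Polynomial.eval_finset_sum]
  refine Finset.sum_congr rfl fun m _ => ?_
  rw [Polynomial.eval_smul, smul_eq_mul, hc]

lemma Dheat_eval (N : ℕ) (τ₀ : ℂ) (p : Polynomial ℂ) (τ y : ℂ) :
    eval y (derivative (heatOp N (τ - τ₀) p))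
      = ∑ m ∈ Finset.range (p.natDegree + 1),
          hc N τ₀ m τ * eval y (derivative (Polynomial.derivative^[2 * m] p)) := by
  rw [heatOp, derivative_sum, Polynomial.eval_finset_sum]
  refine Finset.sum_congr rfl fun m _ => ?_
  rw [derivative_smul, Polynomial.eval_smul, smul_eq_mul, hc]

lemma DDheat_eval (N : ℕ) (τ₀ : ℂ) (p : Polynomial ℂ) (τ y : ℂ) :
    eval y (derivative (derivative (heatOp N (τ - τ₀) p)))
      = ∑ m ∈ Finset.range (p.natDegree + 1),
          hc N τ₀ m τ * eval y (derivative (derivative (Polynomial.derivative^[2 * m] p))) := by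
  rw [heatOp, derivative_sum, derivative_sum, Polynomial.eval_finset_sum]
  refine Finset.sum_congr rfl fun m _ => ?_
  rw [derivative_smul, derivative_smul, Polynomial.eval_smul, smul_eq_mul, hc]

lemma heat_eq (N : ℕ) (hN : 0 < N) (τ₀ : ℂ) (p : Polynomial ℂ) (τ y : ℂ) :
    ∑ m ∈ Finset.range (p.natDegree + 1),
        hc' N τ₀ m τ * eval y (Polynomial.derivative^[2 * m] p)
      = (1 / (2 * N)) * eval y (derivative (derivative (heatOp N (τ - τ₀) p))) := by
  have h2N : (2 * (N : ℂ)) ≠ 0 := by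
    simp [Nat.cast_ne_zero]; omega
  rw [DDheat_eval]
  rw [Finset.sum_range_succ' (fun m => hc' N τ₀ m τ * eval y (Polynomial.derivative^[2 * m] p))]
  rw [Finset.sum_range_succ (fun m => hc N τ₀ m τ *
        eval y (derivative (derivative (Polynomial.derivative^[2 * m] p))))]
  have hlast : derivative (derivative (Polynomial.derivative^[2 * p.natDegree] p)) = 0 := by
    have : derivative (derivative (Polynomial.derivative^[2 * p.natDegree] p))
        = Polynomial.derivative^[2 * p.natDegree + 1 + 1] p := by
      rw [Function.iterate_succ_apply', Function.iterate_succ_apply']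
    rw [this]
    apply Polynomial.iterate_derivative_eq_zero
    omega
  rw [hlast]
  simp only [Polynomial.eval_zero, mul_zero, add_zero]
  rw [mul_sum]
  have h0 : hc' N τ₀ 0 τ * eval y (Polynomial.derivative^[0] p) = 0 := by
    simp [hc']
  rw [h0, add_zero]
  refine Finset.sum_congr rfl fun i _ => ?_
  have hiter : Polynomial.derivative^[2 * (i + 1)] p
      = derivative (derivative (Polynomial.derivative^[2 * i] p)) := by
    have : 2 * (i + 1) = (2 * i + 1) + 1 := by ring
    rw [this, Function.iterate_succ_apply', Function.iterate_succ_apply']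
  rw [hiter]
  have hcoef : hc' N τ₀ (i + 1) τ = (1 / (2 * N)) * hc N τ₀ i τ := by
    rw [hc', hc]
    have hfac : ((Nat.factorial (i + 1) : ℂ)) = (i + 1) * (Nat.factorial i : ℂ) := by
      rw [Nat.factorial_succ]; push_cast; ring
    have hi1 : ((i : ℂ) + 1) ≠ 0 := Nat.cast_add_one_ne_zero i
    have hfa : (Nat.factorial i : ℂ) ≠ 0 := by
      exact_mod_cast Nat.cast_ne_zero.2 (Nat.factorial_ne_zero i)
    rw [hfac]
    push_cast
    field_simp
    ring
  rw [hcoef]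
  ring

/-- the two-variable polynomial-type map -/
noncomputable def Fs (N : ℕ) (τ₀ : ℂ) (p : Polynomial ℂ) (w : ℂ × ℂ) : ℂ :=
  ∑ m ∈ Finset.range (p.natDegree + 1),
    hc N τ₀ m w.1 * eval w.2 (Polynomial.derivative^[2 * m] p)

noncomputable def Aco (N : ℕ) (τ₀ : ℂ) (p : Polynomial ℂ) (τ y : ℂ) : ℂ :=
  ∑ m ∈ Finset.range (p.natDegree + 1),
    hc' N τ₀ m τ * eval y (Polynomial.derivative^[2 * m] p)

noncomputable def Bco (N : ℕ) (τ₀ : ℂ) (p : Polynomial ℂ) (τ y : ℂ) : ℂ :=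
  ∑ m ∈ Finset.range (p.natDegree + 1),
    hc N τ₀ m τ * eval y (derivative (Polynomial.derivative^[2 * m] p))

lemma Fs_strict (N : ℕ) (τ₀ : ℂ) (p : Polynomial ℂ) (τ y : ℂ) :
    HasStrictFDerivAt (Fs N τ₀ p)
      ((Aco N τ₀ p τ y) • ContinuousLinearMap.fst ℂ ℂ ℂ
        + (Bco N τ₀ p τ y) • ContinuousLinearMap.snd ℂ ℂ ℂ) (τ, y) := by
  have H : ∀ m ∈ Finset.range (p.natDegree + 1),
      HasStrictFDerivAt (fun w : ℂ × ℂ => hc N τ₀ m w.1 * eval w.2 (Polynomial.derivative^[2 * m] p))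
        ((hc' N τ₀ m τ * eval y (Polynomial.derivative^[2 * m] p)) • ContinuousLinearMap.fst ℂ ℂ ℂ
          + (hc N τ₀ m τ * eval y (derivative (Polynomial.derivative^[2 * m] p)))
              • ContinuousLinearMap.snd ℂ ℂ ℂ) (τ, y) := by
    intro m _
    have hu : HasStrictFDerivAt (fun w : ℂ × ℂ => hc N τ₀ m w.1)
        ((hc' N τ₀ m τ) • ContinuousLinearMap.fst ℂ ℂ ℂ) (τ, y) :=
      HasStrictDerivAt.comp_hasStrictFDerivAt (f := Prod.fst) (τ, y) (hc_strict N τ₀ m τ) hasStrictFDerivAt_fst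
    have hv : HasStrictFDerivAt (fun w : ℂ × ℂ => eval w.2 (Polynomial.derivative^[2 * m] p))
        ((eval y (derivative (Polynomial.derivative^[2 * m] p)))
          • ContinuousLinearMap.snd ℂ ℂ ℂ) (τ, y) :=
      HasStrictDerivAt.comp_hasStrictFDerivAt (f := Prod.snd)
        (τ, y) (Polynomial.hasStrictDerivAt (Polynomial.derivative^[2 * m] p) y) hasStrictFDerivAt_snd
    have := hu.mul hv
    refine this.congr_fderiv (Eq.symm ?_)
    refine ContinuousLinearMap.ext fun w => ?_
    simp [smul_smul, smul_eq_mul]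
    ring
  have := HasStrictFDerivAt.fun_sum H
  refine this.congr_fderiv (Eq.symm ?_)
  refine ContinuousLinearMap.ext fun w => ?_
  simp only [Aco, Bco, ContinuousLinearMap.sum_apply, ContinuousLinearMap.add_apply,
    ContinuousLinearMap.smul_apply, ContinuousLinearMap.coe_fst', ContinuousLinearMap.coe_snd',
    smul_eq_mul, Finset.sum_add_distrib, Finset.sum_mul]

lemma derivative_prod_XC {ι : Type*} [DecidableEq ι] (s : Finset ι) (f : ι → ℂ) :
    derivative (∏ k ∈ s, (X - C (f k))) = ∑ k ∈ s, ∏ l ∈ s.erase k, (X - C (f l)) := by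
  induction s using Finset.induction_on with
  | empty => simp
  | @insert a s ha ih =>
    rw [Finset.prod_insert ha, derivative_mul, ih, Finset.sum_insert ha,
      Finset.erase_insert ha]
    have h1 : derivative (X - C (f a)) = 1 := by simp
    rw [h1, one_mul, Finset.mul_sum]
    congr 1
    refine Finset.sum_congr rfl fun k hk => ?_
    have hak : a ≠ k := fun h => ha (h ▸ hk)
    rw [Finset.erase_insert_of_ne hak, Finset.prod_insert
      (fun h => ha (Finset.mem_of_mem_erase h))]

lemma eval_D_prod {N : ℕ} (w : Fin N → ℂ) (j : Fin N) :
    eval (w j) (derivative (∏ k, (X - C (w k))))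
      = ∏ k ∈ Finset.univ.erase j, (w j - w k) := by
  rw [derivative_prod_XC, Polynomial.eval_finset_sum]
  rw [Finset.sum_eq_single j]
  · rw [Polynomial.eval_prod]
    exact Finset.prod_congr rfl fun k _ => by simp
  · intro k _ hkj
    rw [Polynomial.eval_prod]
    apply Finset.prod_eq_zero (Finset.mem_erase.2 ⟨Ne.symm hkj, Finset.mem_univ j⟩)
    simp
  · intro h
    exact absurd (Finset.mem_univ j) h

lemma eval_DD_prod {N : ℕ} (w : Fin N → ℂ) (j : Fin N) :
    eval (w j) (derivative (derivative (∏ k, (X - C (w k)))))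
      = 2 * ∑ k ∈ Finset.univ.erase j,
          ∏ l ∈ (Finset.univ.erase j).erase k, (w j - w l) := by
  rw [derivative_prod_XC, derivative_sum]
  have hterm : ∀ k : Fin N,
      eval (w j) (derivative (∏ l ∈ Finset.univ.erase k, (X - C (w l))))
        = ∑ m ∈ (Finset.univ.erase k),
            ∏ l ∈ ((Finset.univ.erase k).erase m), (w j - w l) := by
    intro k
    rw [derivative_prod_XC, Polynomial.eval_finset_sum]
    refine Finset.sum_congr rfl fun m _ => ?_
    rw [Polynomial.eval_prod]
    exact Finset.prod_congr rfl fun l _ => by simp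
  rw [Polynomial.eval_finset_sum]
  simp only [hterm]
  rw [← Finset.add_sum_erase _ _ (Finset.mem_univ j)]
  have h2 : ∀ k ∈ Finset.univ.erase j,
      (∑ m ∈ (Finset.univ.erase k), ∏ l ∈ ((Finset.univ.erase k).erase m), (w j - w l))
        = ∏ l ∈ ((Finset.univ.erase j).erase k), (w j - w l) := by
    intro k hk
    have hkj : k ≠ j := (Finset.mem_erase.1 hk).1
    rw [Finset.sum_eq_single j]
    · rw [Finset.erase_right_comm]
    · intro m hm hmj
      apply Finset.prod_eq_zero (i := j)
      · exact Finset.mem_erase.2 ⟨Ne.symm hmj,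
          Finset.mem_erase.2 ⟨Ne.symm hkj, Finset.mem_univ j⟩⟩
      · simp
    · intro h
      exact absurd (Finset.mem_erase.2 ⟨Ne.symm hkj, Finset.mem_univ j⟩) h
  rw [Finset.sum_congr rfl h2]
  ring

lemma prod_ratio {N : ℕ} (w : Fin N → ℂ) (hw : Function.Injective w) (j : Fin N) :
    ∑ k ∈ Finset.univ.erase j, ∏ l ∈ (Finset.univ.erase j).erase k, (w j - w l)
      = (∏ k ∈ Finset.univ.erase j, (w j - w k))
        * ∑ k ∈ Finset.univ.erase j, 1 / (w j - w k) := by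
  rw [Finset.mul_sum]
  refine Finset.sum_congr rfl fun k hk => ?_
  have hne : w j - w k ≠ 0 := by
    have hkj : k ≠ j := (Finset.mem_erase.1 hk).1
    exact sub_ne_zero.2 fun h => hkj (hw h).symm
  rw [← Finset.mul_prod_erase _ _ hk]
  field_simp

lemma FACT {N : ℕ} (hN : 0 < N) (Q : Polynomial ℂ) (hQd : Q.natDegree = N)
    (w : Fin N → ℂ) (hw : Function.Injective w) (hroot : ∀ j, eval (w j) Q = 0) :
    Q = C Q.leadingCoeff * ∏ j, (X - C (w j)) := by
  set c := Q.leadingCoeff with hc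
  set P : Polynomial ℂ := ∏ j, (X - C (w j)) with hP
  have hPm : P.Monic := monic_prod_of_monic _ _ fun j _ => monic_X_sub_C (w j)
  have hPd : P.natDegree = N := by
    rw [hP, Polynomial.natDegree_prod _ _ fun j _ => X_sub_C_ne_zero (w j)]
    simp
  have hcoeffP : P.coeff N = 1 := by
    have := hPm.coeff_natDegree
    rwa [hPd] at this
  set R : Polynomial ℂ := Q - C c * P with hR
  have hRN : R.coeff N = 0 := by
    rw [hR, Polynomial.coeff_sub, Polynomial.coeff_C_mul, hcoeffP, mul_one,
      ← hQd, Polynomial.coeff_natDegree, hc, sub_self]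
  have hRd : R.natDegree ≤ N := by
    refine le_trans (Polynomial.natDegree_sub_le _ _) ?_
    refine max_le (le_of_eq hQd) (le_trans (Polynomial.natDegree_C_mul_le _ _) (le_of_eq hPd))
  have hReval : ∀ j, eval (w j) R = 0 := by
    intro j
    rw [hR, Polynomial.eval_sub, hroot, Polynomial.eval_mul, Polynomial.eval_C,
      Polynomial.eval_prod]
    rw [Finset.prod_eq_zero (Finset.mem_univ j) (by simp)]
    ring
  have hR0 : R = 0 := by
    by_cases h : R = 0
    · exact h
    · have hlt : R.natDegree < N := by
        rcases lt_or_eq_of_le hRd with h1 | h1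
        · exact h1
        · exfalso
          have := Polynomial.coeff_natDegree (p := R)
          rw [h1, hRN] at this
          exact h (Polynomial.leadingCoeff_eq_zero.1 this.symm)
      exact Polynomial.eq_zero_of_natDegree_lt_card_of_eval_eq_zero R hw hReval
        (by rwa [Fintype.card_fin])
  have := sub_eq_zero.1 hR0
  rw [this]

noncomputable def fwdMap (a b : ℂ) : (ℂ × ℂ) →L[ℂ] (ℂ × ℂ) :=
  (ContinuousLinearMap.fst ℂ ℂ ℂ).prod
    (a • ContinuousLinearMap.fst ℂ ℂ ℂ + b • ContinuousLinearMap.snd ℂ ℂ ℂ)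

noncomputable def bwdMap (a b : ℂ) : (ℂ × ℂ) →L[ℂ] (ℂ × ℂ) :=
  (ContinuousLinearMap.fst ℂ ℂ ℂ).prod
    ((-(a / b)) • ContinuousLinearMap.fst ℂ ℂ ℂ + b⁻¹ • ContinuousLinearMap.snd ℂ ℂ ℂ)

noncomputable def mkEquiv (a b : ℂ) (hb : b ≠ 0) : (ℂ × ℂ) ≃L[ℂ] (ℂ × ℂ) :=
  LinearEquiv.toContinuousLinearEquiv <| LinearEquiv.ofLinear
    ((fwdMap a b : (ℂ × ℂ) →ₗ[ℂ] (ℂ × ℂ)))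
    ((bwdMap a b : (ℂ × ℂ) →ₗ[ℂ] (ℂ × ℂ)))
    (by
      refine LinearMap.ext fun w => ?_
      obtain ⟨x, y⟩ := w
      simp [fwdMap, bwdMap, Prod.ext_iff]
      field_simp
      ring)
    (by
      refine LinearMap.ext fun w => ?_
      obtain ⟨x, y⟩ := w
      simp [fwdMap, bwdMap, Prod.ext_iff]
      field_simp
      ring)

lemma mkEquiv_coe (a b : ℂ) (hb : b ≠ 0) :
    ((mkEquiv a b hb : (ℂ × ℂ) ≃L[ℂ] (ℂ × ℂ)) : (ℂ × ℂ) →L[ℂ] (ℂ × ℂ)) = fwdMap a b :=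
  ContinuousLinearMap.ext fun _ => rfl



lemma Fs_eq (N : ℕ) (τ₀ : ℂ) (p : Polynomial ℂ) (τ y : ℂ) :
    Fs N τ₀ p (τ, y) = eval y (heatOp N (τ - τ₀) p) :=
  (heatOp_eval N τ₀ p τ y).symm

lemma Bco_eq (N : ℕ) (τ₀ : ℂ) (p : Polynomial ℂ) (τ y : ℂ) :
    Bco N τ₀ p τ y = eval y (derivative (heatOp N (τ - τ₀) p)) :=
  (Dheat_eval N τ₀ p τ y).symm

lemma Aco_eq (N : ℕ) (hN : 0 < N) (τ₀ : ℂ) (p : Polynomial ℂ) (τ y : ℂ) :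
    Aco N τ₀ p τ y = (1 / (2 * N)) * eval y (derivative (derivative (heatOp N (τ - τ₀) p))) :=
  heat_eq N hN τ₀ p τ y

lemma exists_phi (N : ℕ) (τ₀ : ℂ) (p : Polynomial ℂ) {t y : ℂ}
    (hb : Bco N τ₀ p t y ≠ 0) :
    ∃ φ : OpenPartialHomeomorph (ℂ × ℂ) (ℂ × ℂ),
      (⇑φ = fun w : ℂ × ℂ => (w.1, Fs N τ₀ p w)) ∧ (t, y) ∈ φ.source ∧
        ∃ L : (ℂ × ℂ) →L[ℂ] (ℂ × ℂ),
          HasStrictFDerivAt (⇑φ.symm) L (t, Fs N τ₀ p (t, y)) := by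
  have hG : HasStrictFDerivAt (fun w : ℂ × ℂ => (w.1, Fs N τ₀ p w))
      (fwdMap (Aco N τ₀ p t y) (Bco N τ₀ p t y)) (t, y) :=
    HasStrictFDerivAt.prodMk hasStrictFDerivAt_fst (Fs_strict N τ₀ p t y)
  rw [← mkEquiv_coe (Aco N τ₀ p t y) (Bco N τ₀ p t y) hb] at hG
  refine ⟨HasStrictFDerivAt.toOpenPartialHomeomorph _ hG, HasStrictFDerivAt.toOpenPartialHomeomorph_coe hG,
    HasStrictFDerivAt.mem_toOpenPartialHomeomorph_source hG,
    ⟨((mkEquiv (Aco N τ₀ p t y) (Bco N τ₀ p t y) hb).symm :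
        (ℂ × ℂ) →L[ℂ] (ℂ × ℂ)), ?_⟩⟩
  have h := hG.to_localInverse
  rw [HasStrictFDerivAt.localInverse_def] at h
  exact h

end HeatAux

open HeatAux in
theorem stmt0 (N : ℕ) (hN : 0 < N) (p : Polynomial ℂ) (hdeg : p.natDegree = N)
    (τ₀ σ : ℂ)
    (hroots : ((heatOp N (σ - τ₀) p).roots).Nodup) :
    ∃ V : Set ℂ, IsOpen V ∧ σ ∈ V ∧
      ∃ z : Fin N → ℂ → ℂ,
        (∀ j, DifferentiableOn ℂ (z j) V) ∧
        (∀ τ ∈ V,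
          heatOp N (τ - τ₀) p
            = Polynomial.C p.leadingCoeff * ∏ j, (Polynomial.X - Polynomial.C (z j τ))) ∧
        (∀ τ ∈ V, ∀ j k : Fin N, j ≠ k → z j τ ≠ z k τ) ∧
        (∀ j : Fin N, ∀ τ ∈ V,
          HasDerivAt (z j)
            (-(1 / (N : ℂ)) * ∑ k ∈ Finset.univ.erase j, 1 / (z j τ - z k τ)) τ) := by
  classical
  have hp0 : p ≠ 0 := by
    intro h
    rw [h, Polynomial.natDegree_zero] at hdeg
    omega
  have hc0 : p.leadingCoeff ≠ 0 := Polynomial.leadingCoeff_ne_zero.2 hp0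
  set c := p.leadingCoeff with hcdef
  have hqd : ∀ τ : ℂ, (heatOp N (τ - τ₀) p).natDegree = N := fun τ => by
    rw [heatOp_natDegree N _ hp0, hdeg]
  have hql : ∀ τ : ℂ, (heatOp N (τ - τ₀) p).leadingCoeff = c := fun τ =>
    heatOp_leadingCoeff N _ hp0
  -- roots at σ
  have hcard : Multiset.card ((heatOp N (σ - τ₀) p).roots) = N := by
    rw [Polynomial.splits_iff_card_roots.1 (IsAlgClosed.splits _), hqd]
  set R : Finset ℂ := ⟨(heatOp N (σ - τ₀) p).roots, hroots⟩ with hR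
  have hRcard : R.card = N := hcard
  set eq0 := (R.equivFin.trans (finCongr hRcard)).symm with heq0
  set r : Fin N → ℂ := fun j => ((eq0 j : {x // x ∈ R}) : ℂ) with hrdef
  have hr_inj : Function.Injective r := fun a b h => eq0.injective (Subtype.ext h)
  have hr_root : ∀ j, eval (r j) (heatOp N (σ - τ₀) p) = 0 := by
    intro j
    have hm0 : (r j) ∈ R := (eq0 j).2
    have hm : r j ∈ (heatOp N (σ - τ₀) p).roots := hm0
    exact Polynomial.isRoot_of_mem_roots hm
  -- nonvanishing of Bco at simple roots
  have hBco_ne : ∀ (τ : ℂ) (w : Fin N → ℂ), Function.Injective w →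
      (∀ k, eval (w k) (heatOp N (τ - τ₀) p) = 0) → ∀ j, Bco N τ₀ p τ (w j) ≠ 0 := by
    intro τ w hw hroot j
    have hfact := FACT hN _ (hqd τ) w hw hroot
    rw [hql τ] at hfact
    rw [Bco_eq, hfact, derivative_C_mul, Polynomial.eval_mul, Polynomial.eval_C,
      eval_D_prod w j]
    refine mul_ne_zero hc0 (Finset.prod_ne_zero_iff.2 fun k hk => ?_)
    exact sub_ne_zero.2 fun h => (Finset.mem_erase.1 hk).1 (hw h).symm
  have hB_σ : ∀ j, Bco N τ₀ p σ (r j) ≠ 0 := hBco_ne σ r hr_inj hr_root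
  -- partial homeomorphisms at σ
  have hphi : ∀ j : Fin N, ∃ φ : OpenPartialHomeomorph (ℂ × ℂ) (ℂ × ℂ),
      (⇑φ = fun w : ℂ × ℂ => (w.1, Fs N τ₀ p w)) ∧ (σ, r j) ∈ φ.source ∧
        ∃ L : (ℂ × ℂ) →L[ℂ] (ℂ × ℂ),
          HasStrictFDerivAt (⇑φ.symm) L (σ, Fs N τ₀ p (σ, r j)) :=
    fun j => exists_phi N τ₀ p (hB_σ j)
  choose φ hφcoe hφmem _hφL using hphi
  set z : Fin N → ℂ → ℂ := fun j s => ((φ j).symm (s, 0)).2 with hzdef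
  have hFs0σ : ∀ j, Fs N τ₀ p (σ, r j) = 0 := fun j => by
    rw [Fs_eq]; exact hr_root j
  have hφσ : ∀ j, (φ j) (σ, r j) = (σ, 0) := fun j => by
    rw [hφcoe j]
    simp only [hFs0σ j]
  have hmem_target : ∀ j, ((σ : ℂ), (0 : ℂ)) ∈ (φ j).target := fun j => by
    rw [← hφσ j]; exact (φ j).map_source (hφmem j)
  have hf3 : ∀ (j : Fin N) (s : ℂ), (s, (0 : ℂ)) ∈ (φ j).target →
      ((φ j).symm (s, 0) = (s, z j s) ∧ Fs N τ₀ p (s, z j s) = 0) := by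
    intro j s hs
    have h1 : (φ j) ((φ j).symm (s, 0)) = (s, 0) := (φ j).right_inv hs
    rw [hφcoe j] at h1
    have hfst : ((φ j).symm (s, 0)).1 = s := congrArg Prod.fst h1
    have hval : Fs N τ₀ p ((φ j).symm (s, 0)) = 0 := congrArg Prod.snd h1
    have hxy : (φ j).symm (s, 0) = (s, z j s) := by
      rw [hzdef]
      exact Prod.ext hfst rfl
    exact ⟨hxy, by rwa [hxy] at hval⟩
  have hzσ : ∀ j, z j σ = r j := by
    intro j
    have h := (φ j).left_inv (hφmem j)
    rw [hφσ j] at h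
    rw [hzdef]
    simp only [h]
  have hzcontσ : ∀ j, ContinuousAt (z j) σ := by
    intro j
    have h1 : ContinuousAt (fun s : ℂ => (s, (0 : ℂ))) σ :=
      (continuous_id.prodMk continuous_const).continuousAt
    have h2 : ContinuousAt (⇑(φ j).symm) ((σ : ℂ), (0 : ℂ)) :=
      (φ j).continuousAt_symm (hmem_target j)
    have h3 : ContinuousAt ((⇑(φ j).symm) ∘ (fun s : ℂ => (s, (0 : ℂ)))) σ :=
      ContinuousAt.comp (f := fun s : ℂ => (s, (0 : ℂ))) h2 h1
    have h4 : ContinuousAt (Prod.snd ∘ ((⇑(φ j).symm) ∘ (fun s : ℂ => (s, (0 : ℂ))))) σ :=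
      continuous_snd.continuousAt.comp h3
    exact h4
  -- the neighborhood
  set Sset : Set ℂ := {s : ℂ | (∀ j, (s, (0 : ℂ)) ∈ (φ j).target) ∧
      ∀ j k, j ≠ k → z j s ≠ z k s} with hSset
  have hS : Sset ∈ nhds σ := by
    have e1 : ∀ᶠ s in nhds σ, ∀ j, (s, (0 : ℂ)) ∈ (φ j).target := by
      rw [Filter.eventually_all]
      intro j
      have ho : IsOpen {s : ℂ | (s, (0 : ℂ)) ∈ (φ j).target} :=
        (φ j).open_target.preimage (continuous_id.prodMk continuous_const)
      exact ho.mem_nhds (hmem_target j)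
    have e2 : ∀ᶠ s in nhds σ, ∀ j k : Fin N, j ≠ k → z j s ≠ z k s := by
      rw [Filter.eventually_all]
      intro j
      rw [Filter.eventually_all]
      intro k
      by_cases hjk : j = k
      · exact Filter.Eventually.of_forall fun s h => absurd hjk h
      · have hne : r j - r k ≠ 0 := sub_ne_zero.2 fun h => hjk (hr_inj h)
        have hcont : ContinuousAt (fun s => z j s - z k s) σ := (hzcontσ j).sub (hzcontσ k)
        have hfσ : z j σ - z k σ ≠ 0 := by rw [hzσ j, hzσ k]; exact hne
        exact (hcont.eventually_ne hfσ).mono fun s hs _ => sub_ne_zero.1 hs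
    exact e1.and e2
  set V : Set ℂ := interior Sset with hV
  have hσV : σ ∈ V := mem_interior_iff_mem_nhds.2 hS
  have hVsub : V ⊆ Sset := interior_subset
  have hVP : ∀ τ ∈ V, (∀ j, (τ, (0 : ℂ)) ∈ (φ j).target) ∧
      ∀ j k : Fin N, j ≠ k → z j τ ≠ z k τ := fun τ hτ => hVsub hτ
  have hzroot : ∀ τ ∈ V, ∀ k, eval (z k τ) (heatOp N (τ - τ₀) p) = 0 := by
    intro τ hτ k
    have := (hf3 k τ ((hVP τ hτ).1 k)).2
    rwa [Fs_eq] at this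
  have hzinj : ∀ τ ∈ V, Function.Injective (fun k => z k τ) := by
    intro τ hτ a b hab
    by_contra hne
    exact (hVP τ hτ).2 a b hne hab
  have hfactV : ∀ τ ∈ V, heatOp N (τ - τ₀) p = C c * ∏ j, (X - C (z j τ)) := by
    intro τ hτ
    have := FACT hN _ (hqd τ) _ (hzinj τ hτ) (hzroot τ hτ)
    rwa [hql τ] at this
  have hBV : ∀ τ ∈ V, ∀ j, Bco N τ₀ p τ (z j τ) ≠ 0 :=
    fun τ hτ j => hBco_ne τ _ (hzinj τ hτ) (hzroot τ hτ) j
  -- the main derivative computation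
  have hderiv : ∀ (j : Fin N), ∀ τ ∈ V,
      HasDerivAt (z j)
        (-(1 / (N : ℂ)) * ∑ k ∈ Finset.univ.erase j, 1 / (z j τ - z k τ)) τ := by
    intro j τ hτ
    obtain ⟨ψ, hψcoe, hψmem, L, hψL⟩ := exists_phi N τ₀ p (hBV τ hτ j)
    have hFs0 : Fs N τ₀ p (τ, z j τ) = 0 := by rw [Fs_eq]; exact hzroot τ hτ j
    rw [hFs0] at hψL
    have hψpt : ψ (τ, z j τ) = (τ, 0) := by
      rw [hψcoe]
      simp only [hFs0]
    have hψtarget : ((τ : ℂ), (0 : ℂ)) ∈ ψ.target := by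
      rw [← hψpt]; exact ψ.map_source hψmem
    have hψsymm0 : ψ.symm (τ, 0) = (τ, z j τ) := by
      have h := ψ.left_inv hψmem
      rwa [hψpt] at h
    set wfun : ℂ → ℂ := fun s => (ψ.symm (s, 0)).2 with hwdef
    -- wfun has a derivative at τ
    have hι : HasStrictFDerivAt (fun s : ℂ => (s, (0 : ℂ)))
        (ContinuousLinearMap.inl ℂ ℂ ℂ) τ := by
      have h := (ContinuousLinearMap.inl ℂ ℂ ℂ).hasStrictFDerivAt (x := τ)
      have hfe : ⇑(ContinuousLinearMap.inl ℂ ℂ ℂ) = fun s : ℂ => (s, (0 : ℂ)) := by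
        funext s; simp
      rwa [hfe] at h
    have hcomp1 : HasStrictFDerivAt (fun s : ℂ => ψ.symm (s, 0))
        (L.comp (ContinuousLinearMap.inl ℂ ℂ ℂ)) τ := by
      have := hψL.comp τ hι
      exact this
    have hw : HasDerivAt wfun
        (((ContinuousLinearMap.snd ℂ ℂ ℂ).comp
          (L.comp (ContinuousLinearMap.inl ℂ ℂ ℂ))) 1) τ := by
      have h2 := (ContinuousLinearMap.snd ℂ ℂ ℂ).hasStrictFDerivAt.comp τ hcomp1
      exact h2.hasFDerivAt.hasDerivAt
    set d : ℂ := ((ContinuousLinearMap.snd ℂ ℂ ℂ).comp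
      (L.comp (ContinuousLinearMap.inl ℂ ℂ ℂ))) 1 with hd0
    -- z j agrees with wfun near τ
    have hev1 : ∀ᶠ s in nhds τ, s ∈ V := isOpen_interior.mem_nhds hτ
    have hev2 : ∀ᶠ s in nhds τ, ψ.symm (s, 0) ∈ (φ j).source := by
      have hcont : ContinuousAt (fun s : ℂ => ψ.symm (s, 0)) τ := by
        have h1 : ContinuousAt (fun s : ℂ => (s, (0 : ℂ))) τ :=
          (continuous_id.prodMk continuous_const).continuousAt
        have h2 : ContinuousAt ((⇑ψ.symm) ∘ (fun s : ℂ => (s, (0 : ℂ)))) τ :=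
          ContinuousAt.comp (f := fun s : ℂ => (s, (0 : ℂ))) (ψ.continuousAt_symm hψtarget) h1
        exact h2
      have hmem : ((τ : ℂ), z j τ) ∈ (φ j).source := by
        have h := (hf3 j τ ((hVP τ hτ).1 j)).1
        rw [← h]
        exact (φ j).map_target ((hVP τ hτ).1 j)
      have hnb : (φ j).source ∈ nhds ((fun s : ℂ => ψ.symm (s, 0)) τ) := by
        have : (fun s : ℂ => ψ.symm (s, 0)) τ = ((τ : ℂ), z j τ) := hψsymm0
        rw [this]
        exact (φ j).open_source.mem_nhds hmem
      exact hcont.eventually_mem hnb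
    have hev3 : ∀ᶠ s in nhds τ, (s, (0 : ℂ)) ∈ ψ.target := by
      have ho : IsOpen {s : ℂ | (s, (0 : ℂ)) ∈ ψ.target} :=
        ψ.open_target.preimage (continuous_id.prodMk continuous_const)
      exact ho.mem_nhds hψtarget
    have heqzw : z j =ᶠ[nhds τ] wfun := by
      filter_upwards [hev1, hev2, hev3] with s hsV hs2 hs3
      have hsS := hVsub hsV
      have hA : (φ j).symm (s, 0) = (s, z j s) := (hf3 j s (hsS.1 j)).1
      have hGz : (φ j) (s, z j s) = (s, 0) := by
        rw [← hA]
        exact (φ j).right_inv (hsS.1 j)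
      have hGw : (φ j) (ψ.symm (s, 0)) = (s, 0) := by
        rw [hφcoe j]
        have h := ψ.right_inv hs3
        rw [hψcoe] at h
        exact h
      have hmem2 : (s, z j s) ∈ (φ j).source := by
        rw [← hA]
        exact (φ j).map_target (hsS.1 j)
      have := (φ j).injOn hmem2 hs2 (hGz.trans hGw.symm)
      have hsnd := congrArg Prod.snd this
      exact hsnd
    have hzd : HasDerivAt (z j) d τ := hw.congr_of_eventuallyEq heqzw
    -- implicit differentiation
    have hphi2 : HasDerivAt (fun s => Fs N τ₀ p (s, z j s))
        (Aco N τ₀ p τ (z j τ) + Bco N τ₀ p τ (z j τ) * d) τ := by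
      have hterm : ∀ m ∈ Finset.range (p.natDegree + 1),
          HasDerivAt (fun s => hc N τ₀ m s * eval (z j s) (Polynomial.derivative^[2 * m] p))
            (hc' N τ₀ m τ * eval (z j τ) (Polynomial.derivative^[2 * m] p)
              + hc N τ₀ m τ
                * (eval (z j τ) (derivative (Polynomial.derivative^[2 * m] p)) * d)) τ := by
        intro m _
        have h1 : HasDerivAt (hc N τ₀ m) (hc' N τ₀ m τ) τ := (hc_strict N τ₀ m τ).hasDerivAt
        have h2 : HasDerivAt (fun s => eval (z j s) (Polynomial.derivative^[2 * m] p))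
            (eval (z j τ) (derivative (Polynomial.derivative^[2 * m] p)) * d) τ :=
          (Polynomial.hasDerivAt _ (z j τ)).comp τ hzd
        exact h1.mul h2
      have hsum := HasDerivAt.fun_sum hterm
      have hfn : (fun s => Fs N τ₀ p (s, z j s))
          = fun s => ∑ m ∈ Finset.range (p.natDegree + 1),
              hc N τ₀ m s * eval (z j s) (Polynomial.derivative^[2 * m] p) := by
        funext s
        rfl
      rw [hfn]
      refine hsum.congr_deriv (Eq.symm ?_)
      rw [Aco, Bco, Finset.sum_mul, ← Finset.sum_add_distrib]
      exact Finset.sum_congr rfl fun m _ => by ring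
    have hev0 : (fun s => Fs N τ₀ p (s, z j s)) =ᶠ[nhds τ] (fun _ => (0 : ℂ)) := by
      filter_upwards [hev1] with s hsV
      exact (hf3 j s ((hVsub hsV).1 j)).2
    have h0 : HasDerivAt (fun _ : ℂ => (0 : ℂ))
        (Aco N τ₀ p τ (z j τ) + Bco N τ₀ p τ (z j τ) * d) τ :=
      hphi2.congr_of_eventuallyEq hev0.symm
    have hABd : Aco N τ₀ p τ (z j τ) + Bco N τ₀ p τ (z j τ) * d = 0 :=
      h0.unique (hasDerivAt_const τ 0)
    -- compute the value of d
    have hfact := hfactV τ hτ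
    have hA : Aco N τ₀ p τ (z j τ) = (1 / (2 * (N : ℂ)))
        * (c * (2 * ((∏ k ∈ Finset.univ.erase j, (z j τ - z k τ))
            * ∑ k ∈ Finset.univ.erase j, 1 / (z j τ - z k τ)))) := by
      rw [Aco_eq N hN, hfact, derivative_C_mul, derivative_C_mul, Polynomial.eval_mul,
        Polynomial.eval_C, eval_DD_prod (fun k => z k τ) j,
        prod_ratio (fun k => z k τ) (hzinj τ hτ) j]
    have hBrw : Bco N τ₀ p τ (z j τ)
        = c * ∏ k ∈ Finset.univ.erase j, (z j τ - z k τ) := by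
      rw [Bco_eq, hfact, derivative_C_mul, Polynomial.eval_mul, Polynomial.eval_C,
        eval_D_prod (fun k => z k τ) j]
    have hPne : (∏ k ∈ Finset.univ.erase j, (z j τ - z k τ)) ≠ 0 :=
      Finset.prod_ne_zero_iff.2 fun k hk =>
        sub_ne_zero.2 fun h => (Finset.mem_erase.1 hk).1 ((hzinj τ hτ) h).symm
    have hNne : (N : ℂ) ≠ 0 := Nat.cast_ne_zero.2 hN.ne'
    have hd : d = -(1 / (N : ℂ)) * ∑ k ∈ Finset.univ.erase j, 1 / (z j τ - z k τ) := by
      have h1 : Bco N τ₀ p τ (z j τ) * d = - Aco N τ₀ p τ (z j τ) := by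
        linear_combination hABd
      rw [hBrw, hA] at h1
      have h2 : (c * ∏ k ∈ Finset.univ.erase j, (z j τ - z k τ)) * d
          = (c * ∏ k ∈ Finset.univ.erase j, (z j τ - z k τ))
            * (-(1 / (N : ℂ)) * ∑ k ∈ Finset.univ.erase j, 1 / (z j τ - z k τ)) := by
        rw [h1]
        field_simp
      exact mul_left_cancel₀ (mul_ne_zero hc0 hPne) h2
    rw [← hd]
    exact hzd
  -- assemble
  refine ⟨V, isOpen_interior, hσV, z, ?_, fun τ hτ => hfactV τ hτ,
    fun τ hτ j k hjk => (hVP τ hτ).2 j k hjk, hderiv⟩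
  intro j τ' hτ'
  exact ((hderiv j τ' hτ').differentiableAt).differentiableWithinAt
end

section
/- Let N be a positive integer, U ⊆ ℂ an open set, and z_1, …, z_N : U → ℂ holomorphic functions whose values z_1(τ), …, z_N(τ) are pairwise distinct for each τ ∈ U and which satisfy the system z_j'(τ) = −(1/N) ∑_{k ≠ j} 1/(z_j(τ) − z_k(τ)) for all j and all τ ∈ U. Then for every j and every τ ∈ U, the second derivative satisfies z_j''(τ) = −(2/N²) ∑_{k ≠ j} 1/(z_j(τ) − z_k(τ))³. (These are the equations of motion of the rational Calogero–Moser system.) -/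
open Finset

lemma gram_antisym (a b c : ℂ) (hab : a ≠ b) (hac : a ≠ c) (hbc : b ≠ c) :
    (1/(a - c) - 1/(b - c))/(a - b)^2 + (1/(a - b) - 1/(c - b))/(a - c)^2 = 0 := by
  have h1 : a - b ≠ 0 := sub_ne_zero.mpr hab
  have h2 : a - c ≠ 0 := sub_ne_zero.mpr hac
  have h3 : b - c ≠ 0 := sub_ne_zero.mpr hbc
  have h4 : c - b ≠ 0 := sub_ne_zero.mpr hbc.symm
  field_simp
  ring

lemma key_alg (N : ℕ) (j : Fin N) (w : Fin N → ℂ)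
    (hd : ∀ a b : Fin N, a ≠ b → w a ≠ w b) :
    -(1/(N:ℂ)) * ∑ k ∈ univ.erase j,
      -(((-(1/(N:ℂ)) * ∑ l ∈ univ.erase j, 1/(w j - w l)) -
         (-(1/(N:ℂ)) * ∑ l ∈ univ.erase k, 1/(w k - w l))) / (w j - w k)^2)
    = -(2/(N:ℂ)^2) * ∑ k ∈ univ.erase j, 1/(w j - w k)^3 := by
  set s : Finset (Fin N) := univ.erase j with hs
  have hD : ∑ k ∈ s, ∑ l ∈ s.erase k,
      (1/(w j - w l) - 1/(w k - w l))/(w j - w k)^2 = 0 := by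
    set g : Fin N → Fin N → ℂ :=
      fun k l => (1/(w j - w l) - 1/(w k - w l))/(w j - w k)^2 with hg
    have hswap : ∑ k ∈ s, ∑ l ∈ s.erase k, g k l = ∑ k ∈ s, ∑ l ∈ s.erase k, g l k := by
      refine Finset.sum_comm' (fun x y => ?_)
      constructor
      · rintro ⟨hx, hy⟩
        exact ⟨Finset.mem_erase.mpr ⟨(Finset.ne_of_mem_erase hy).symm, hx⟩,
          Finset.mem_of_mem_erase hy⟩
      · rintro ⟨hx, hy⟩
        exact ⟨Finset.mem_of_mem_erase hx,
          Finset.mem_erase.mpr ⟨(Finset.ne_of_mem_erase hx).symm, hy⟩⟩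
    have hanti : ∀ k ∈ s, ∀ l ∈ s.erase k, g k l + g l k = 0 := by
      intro k hk l hl
      have hkj : k ≠ j := Finset.ne_of_mem_erase hk
      have hlj : l ≠ j := Finset.ne_of_mem_erase (Finset.mem_of_mem_erase hl)
      have hlk : l ≠ k := Finset.ne_of_mem_erase hl
      have := gram_antisym (w j) (w k) (w l) (hd j k hkj.symm) (hd j l hlj.symm)
        (hd k l hlk.symm)
      simpa [hg, add_comm] using this
    have h2 : (2:ℂ) * ∑ k ∈ s, ∑ l ∈ s.erase k, g k l = 0 := by
      calc (2:ℂ) * ∑ k ∈ s, ∑ l ∈ s.erase k, g k l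
          = ∑ k ∈ s, ∑ l ∈ s.erase k, g k l + ∑ k ∈ s, ∑ l ∈ s.erase k, g l k := by
            rw [← hswap]; ring
        _ = ∑ k ∈ s, ∑ l ∈ s.erase k, (g k l + g l k) := by
            rw [← Finset.sum_add_distrib]
            exact Finset.sum_congr rfl fun k hk => (Finset.sum_add_distrib).symm
        _ = 0 :=
            Finset.sum_eq_zero fun k hk => Finset.sum_eq_zero fun l hl => hanti k hk l hl
    exact (mul_eq_zero.mp h2).resolve_left two_ne_zero
  have hterm : ∀ k ∈ s,
      ((∑ l ∈ s, 1/(w j - w l)) - (∑ l ∈ univ.erase k, 1/(w k - w l))) / (w j - w k)^2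
      = 2/(w j - w k)^3 + ∑ l ∈ s.erase k, (1/(w j - w l) - 1/(w k - w l))/(w j - w k)^2 := by
    intro k hk
    have hkj : k ≠ j := Finset.ne_of_mem_erase hk
    have hdjk : w j - w k ≠ 0 := sub_ne_zero.mpr (hd j k hkj.symm)
    have h1 : ∑ l ∈ s, 1/(w j - w l) = 1/(w j - w k) + ∑ l ∈ s.erase k, 1/(w j - w l) := by
      rw [← Finset.sum_erase_add s _ hk]; ring
    have hjk : j ∈ univ.erase k := Finset.mem_erase.mpr ⟨hkj.symm, Finset.mem_univ j⟩
    have h2 : ∑ l ∈ univ.erase k, 1/(w k - w l)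
        = -(1/(w j - w k)) + ∑ l ∈ s.erase k, 1/(w k - w l) := by
      rw [← Finset.sum_erase_add (univ.erase k) _ hjk, Finset.erase_right_comm]
      have hneg : 1/(w k - w j) = -(1/(w j - w k)) := by
        rw [show w k - w j = -(w j - w k) by ring, one_div, inv_neg, one_div]
      rw [hneg, hs]; ring
    have hsub : ∑ l ∈ s.erase k, (1/(w j - w l) - 1/(w k - w l))/(w j - w k)^2
        = ((∑ l ∈ s.erase k, 1/(w j - w l)) - ∑ l ∈ s.erase k, 1/(w k - w l))/(w j - w k)^2 := by
      rw [← Finset.sum_div, Finset.sum_sub_distrib]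
    have h3 : (2:ℂ)/(w j - w k)^3 = (1/(w j - w k) + 1/(w j - w k))/(w j - w k)^2 := by
      field_simp; ring
    rw [h1, h2, hsub, h3, ← add_div]
    congr 1
    ring
  have hA : ∀ k ∈ s,
      -(((-(1/(N:ℂ)) * ∑ l ∈ s, 1/(w j - w l)) -
         (-(1/(N:ℂ)) * ∑ l ∈ univ.erase k, 1/(w k - w l))) / (w j - w k)^2)
      = (1/(N:ℂ)) * (((∑ l ∈ s, 1/(w j - w l)) -
          (∑ l ∈ univ.erase k, 1/(w k - w l))) / (w j - w k)^2) := fun k _ => by ring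
  rw [Finset.sum_congr rfl hA, ← Finset.mul_sum, Finset.sum_congr rfl hterm,
    Finset.sum_add_distrib, hD, add_zero,
    Finset.sum_congr rfl (fun k (_ : k ∈ s) => (mul_one_div (2:ℂ) ((w j - w k)^3)).symm),
    ← Finset.mul_sum]
  ring

theorem stmt1 (N : ℕ) (hN : 0 < N) (U : Set ℂ) (hU : IsOpen U)
    (z : Fin N → ℂ → ℂ)
    (hdist : ∀ τ ∈ U, ∀ j k : Fin N, j ≠ k → z j τ ≠ z k τ)
    (hode : ∀ j : Fin N, ∀ τ ∈ U,
      HasDerivAt (z j)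
        (-(1 / (N : ℂ)) * ∑ k ∈ Finset.univ.erase j, 1 / (z j τ - z k τ)) τ)
    (j : Fin N) (τ : ℂ) (hτ : τ ∈ U) :
    HasDerivAt (deriv (z j))
      (-(2 / (N : ℂ) ^ 2) * ∑ k ∈ Finset.univ.erase j, 1 / (z j τ - z k τ) ^ 3) τ := by
  classical
  have hterm : ∀ k ∈ univ.erase j,
      HasDerivAt (fun σ => 1/(z j σ - z k σ))
        (-(((-(1/(N:ℂ)) * ∑ l ∈ univ.erase j, 1/(z j τ - z l τ)) -
            (-(1/(N:ℂ)) * ∑ l ∈ univ.erase k, 1/(z k τ - z l τ))) / (z j τ - z k τ)^2)) τ := by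
    intro k hk
    have hkj : k ≠ j := Finset.ne_of_mem_erase hk
    have hne : z j τ - z k τ ≠ 0 := sub_ne_zero.mpr (hdist τ hτ j k hkj.symm)
    have h := ((hode j τ hτ).sub (hode k τ hτ)).inv hne
    rw [neg_div] at h
    simp only [← one_div] at h
    exact h
  have hF : HasDerivAt (fun σ => -(1/(N:ℂ)) * ∑ k ∈ univ.erase j, 1/(z j σ - z k σ))
      (-(1/(N:ℂ)) * ∑ k ∈ univ.erase j,
        -(((-(1/(N:ℂ)) * ∑ l ∈ univ.erase j, 1/(z j τ - z l τ)) -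
           (-(1/(N:ℂ)) * ∑ l ∈ univ.erase k, 1/(z k τ - z l τ))) / (z j τ - z k τ)^2)) τ :=
    (HasDerivAt.fun_sum hterm).const_mul _
  have hev : deriv (z j) =ᶠ[nhds τ]
      (fun σ => -(1/(N:ℂ)) * ∑ k ∈ univ.erase j, 1/(z j σ - z k σ)) :=
    Filter.eventuallyEq_of_mem (hU.mem_nhds hτ) (fun σ hσ => (hode j σ hσ).deriv)
  have hmain := hF.congr_of_eventuallyEq hev
  have hkey := key_alg N j (fun m => z m τ) (fun a b hab => hdist τ hτ a b hab)
  rw [← hkey]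
  exact hmain
end

section
/- Let N be a positive integer, let p ∈ ℂ[z] be a polynomial of degree N, fix τ₀ ∈ ℂ, and for τ ∈ ℂ let q_τ = exp(−((τ−τ₀)/(2N)) L_N) p. Suppose that for some σ ∈ ℂ the N roots of q_σ are nonzero and distinct. Then there exist an open neighborhood V of σ and holomorphic functions z_1, …, z_N : V → ℂ such that for every τ ∈ V the values z_1(τ), …, z_N(τ) are the roots of q_τ, are nonzero and pairwise distinct, and satisfy for every j: (1/z_j(τ)) z_j'(τ) = (1/(2N)) [ 1 + ∑_{k ≠ j} (z_j(τ) + z_k(τ)) / (z_j(τ) − z_k(τ)) ]. -/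
open Polynomial Finset

/-- The operator `exp(c L_N)` on polynomials of degree at most `N`, where
`(L_N p)(z) = z² p''(z) − (N−2) z p'(z) − N p(z)`.  Since `L_N` acts diagonally on
monomials, `L_N(z^k) = (k−N)(k+1) z^k`, the exponential multiplies the coefficient
of `z^k` by `exp(c (k−N)(k+1))`. -/
noncomputable def multHeatOp (N : ℕ) (c : ℂ) (p : Polynomial ℂ) : Polynomial ℂ :=
  ∑ k ∈ Finset.range (N + 1),
    Polynomial.C (Complex.exp (c * ((k : ℂ) - N) * ((k : ℂ) + 1)) * p.coeff k)
      * Polynomial.X ^ k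

namespace Stmt6Aux
open Complex

/-! ### Generic local implicit-root lemma from the inverse function theorem -/

theorem localRoot (F : ℂ × ℂ → ℂ) (Aa Bb : ℂ → ℂ → ℂ)
    (hF : ∀ t x : ℂ, HasStrictFDerivAt F
      ((Aa t x) • (ContinuousLinearMap.fst ℂ ℂ ℂ)
        + (Bb t x) • (ContinuousLinearMap.snd ℂ ℂ ℂ)) (t, x))
    (t x : ℂ) (hx : F (t, x) = 0) (hB : Bb t x ≠ 0) :
    ∃ w : ℂ → ℂ, w t = x ∧ (∀ᶠ τ in nhds t, ContinuousAt w τ) ∧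
      (∀ᶠ τ in nhds t, F (τ, w τ) = 0) ∧
      HasDerivAt w (-(Aa t x / Bb t x)) t ∧
      (∀ u : ℂ → ℂ, ContinuousAt u t → u t = x →
        (∀ᶠ τ in nhds t, F (τ, u τ) = 0) → u =ᶠ[nhds t] w) := by
  set A := Aa t x with hA
  set B := Bb t x with hBdef
  set G : ℂ × ℂ → ℂ × ℂ := fun w => (w.1, F w) with hG
  set L : ℂ × ℂ →L[ℂ] ℂ × ℂ := (ContinuousLinearMap.fst ℂ ℂ ℂ).prod
    (A • (ContinuousLinearMap.fst ℂ ℂ ℂ) + B • (ContinuousLinearMap.snd ℂ ℂ ℂ)) with hL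
  set M : ℂ × ℂ →L[ℂ] ℂ × ℂ := (ContinuousLinearMap.fst ℂ ℂ ℂ).prod
    ((-(A/B)) • (ContinuousLinearMap.fst ℂ ℂ ℂ) + B⁻¹ • (ContinuousLinearMap.snd ℂ ℂ ℂ)) with hM
  have h1 : Function.LeftInverse M L := by
    intro w
    simp only [hL, hM, ContinuousLinearMap.prod_apply, ContinuousLinearMap.add_apply,
      ContinuousLinearMap.smul_apply, ContinuousLinearMap.coe_fst',
      ContinuousLinearMap.coe_snd', smul_eq_mul]
    refine Prod.ext rfl ?_
    field_simp
    ring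
  have h2 : Function.RightInverse M L := by
    intro w
    simp only [hL, hM, ContinuousLinearMap.prod_apply, ContinuousLinearMap.add_apply,
      ContinuousLinearMap.smul_apply, ContinuousLinearMap.coe_fst',
      ContinuousLinearMap.coe_snd', smul_eq_mul]
    refine Prod.ext rfl ?_
    field_simp
    ring
  set e : (ℂ × ℂ) ≃L[ℂ] (ℂ × ℂ) := ContinuousLinearEquiv.equivOfInverse L M h1 h2 with he
  have hGe : HasStrictFDerivAt G (e : (ℂ × ℂ) →L[ℂ] (ℂ × ℂ)) (t, x) := by
    have : HasStrictFDerivAt G L (t, x) := hasStrictFDerivAt_fst.prodMk (hF t x)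
    exact this
  set H : ℂ × ℂ → ℂ × ℂ := hGe.localInverse G e (t, x) with hH
  have hGtx : G (t, x) = (t, 0) := by simp [hG, hx]
  have hwt : H (t, 0) = (t, x) := by
    rw [← hGtx]; exact hGe.localInverse_apply_image
  refine ⟨fun τ => (H (τ, 0)).2, by show (H (t,0)).2 = x; rw [hwt], ?_, ?_, ?_, ?_⟩
  · -- eventual continuity
    have hopen : IsOpen (hGe.toOpenPartialHomeomorph G).target := (hGe.toOpenPartialHomeomorph G).open_target
    have hmem : (t, 0) ∈ (hGe.toOpenPartialHomeomorph G).target := by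
      rw [← hGtx]; exact hGe.image_mem_toOpenPartialHomeomorph_target
    have hι : Continuous (fun τ : ℂ => (τ, (0:ℂ))) := continuous_id.prodMk continuous_const
    have hev : ∀ᶠ τ in nhds t, (τ, (0:ℂ)) ∈ (hGe.toOpenPartialHomeomorph G).target := by
      have := hopen.preimage hι
      exact this.mem_nhds (by simpa using hmem)
    filter_upwards [hev] with τ hτ
    have hcH : ContinuousAt H (τ, 0) := by
      rw [hH, HasStrictFDerivAt.localInverse_def]
      exact (hGe.toOpenPartialHomeomorph G).symm.continuousAt (by simpa using hτ)
    have hcomp : ContinuousAt (fun τ' : ℂ => H (τ', 0)) τ :=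
      hcH.comp (f := fun τ' : ℂ => (τ', (0:ℂ))) hι.continuousAt
    exact hcomp.snd
  · -- eventually a root
    have hright := hGe.eventually_right_inverse
    rw [hGtx] at hright
    have hι : ContinuousAt (fun τ : ℂ => (τ, (0:ℂ))) t :=
      (continuous_id.prodMk continuous_const).continuousAt
    have hι' : Filter.Tendsto (fun τ : ℂ => (τ, (0:ℂ))) (nhds t) (nhds (t, (0:ℂ))) := hι
    filter_upwards [hι'.eventually hright] with τ hτ
    have ha : (H (τ, 0)).1 = τ := congrArg Prod.fst hτ
    have hb : F (H (τ, 0)) = 0 := congrArg Prod.snd hτ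
    have hEq : H (τ, 0) = (τ, (H (τ, 0)).2) := by
      refine Prod.ext ha rfl
    show F (τ, (H (τ, 0)).2) = 0
    rw [← hEq]; exact hb
  · -- derivative
    have hinv := hGe.to_localInverse
    rw [hGtx] at hinv
    have hι : HasDerivAt (fun τ : ℂ => (τ, (0:ℂ))) ((1:ℂ), (0:ℂ)) t :=
      (hasDerivAt_id t).prodMk (hasDerivAt_const t 0)
    have hHd : HasDerivAt (fun τ => H (τ, 0)) (e.symm (1, 0)) t :=
      by have := hinv.hasFDerivAt.comp_hasDerivAt t hι; exact this
    have hsnd : HasDerivAt (fun τ => (H (τ, 0)).2) ((e.symm (1, 0)).2) t :=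
      (ContinuousLinearMap.snd ℂ ℂ ℂ).hasFDerivAt.comp_hasDerivAt t hHd
    have : (e.symm (1, 0)) = ((1 : ℂ), -(A/B)) := by
      show M (1, 0) = _
      simp [hM]
    rw [this] at hsnd
    exact hsnd
  · -- uniqueness
    intro u hu hut hroot
    have hleft := hGe.eventually_left_inverse
    have htend : Filter.Tendsto (fun τ : ℂ => (τ, u τ)) (nhds t) (nhds (t, x)) := by
      have : ContinuousAt (fun τ : ℂ => (τ, u τ)) t := continuousAt_id.prodMk hu
      rw [ContinuousAt, hut] at this
      exact this
    filter_upwards [htend.eventually hleft, hroot] with τ hτ hr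
    have : G (τ, u τ) = (τ, 0) := by simp [hG, hr]
    rw [this] at hτ
    exact (congrArg Prod.snd hτ).symm

/-! ### Derivatives of factored polynomials -/

lemma derivative_finset_prod {ι : Type*} [DecidableEq ι] (s : Finset ι) (f : ι → Polynomial ℂ) :
    derivative (∏ i ∈ s, f i) = ∑ i ∈ s, (∏ j ∈ s.erase i, f j) * derivative (f i) := by
  rw [Finset.prod_eq_multiset_prod, derivative_prod, Finset.sum_eq_multiset_sum]
  congr 1

lemma eval_deriv_prod (n : ℕ) (b : Fin n → ℂ) (j : Fin n) (lc : ℂ) :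
    (derivative (Polynomial.C lc * ∏ k, (Polynomial.X - Polynomial.C (b k)))).eval (b j)
      = lc * ∏ k ∈ Finset.univ.erase j, (b j - b k) := by
  rw [derivative_C_mul, derivative_finset_prod]
  simp only [derivative_sub, derivative_X, derivative_C, sub_zero, mul_one, eval_mul, eval_C,
    eval_finset_sum, eval_prod, eval_sub, eval_X]
  congr 1
  rw [Finset.sum_eq_single j]
  · intro i _ hij
    refine Finset.prod_eq_zero (Finset.mem_erase.2 ⟨(Ne.symm hij), Finset.mem_univ j⟩) ?_
    simp
  · simp

lemma eval_deriv2_prod (n : ℕ) (b : Fin n → ℂ) (j : Fin n) (lc : ℂ) :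
    (derivative (derivative
        (Polynomial.C lc * ∏ k, (Polynomial.X - Polynomial.C (b k))))).eval (b j)
      = 2 * lc * ∑ m ∈ Finset.univ.erase j,
          ∏ k ∈ (Finset.univ.erase j).erase m, (b j - b k) := by
  rw [derivative_C_mul, derivative_finset_prod, derivative_C_mul]
  simp only [derivative_sub, derivative_X, derivative_C, sub_zero, mul_one, derivative_sum,
    derivative_finset_prod, eval_mul, eval_C, eval_finset_sum, eval_prod, eval_sub, eval_X]
  have key : ∀ i : Fin n, i ≠ j →
      (∑ m ∈ (Finset.univ.erase i), ∏ k ∈ (Finset.univ.erase i).erase m, (b j - b k))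
        = ∏ k ∈ (Finset.univ.erase j).erase i, (b j - b k) := by
    intro i hij
    rw [Finset.sum_eq_single j]
    · rw [Finset.erase_right_comm]
    · intro m hm hmj
      refine Finset.prod_eq_zero (i := j) ?_ (by simp)
      exact Finset.mem_erase.2 ⟨Ne.symm hmj, Finset.mem_erase.2 ⟨Ne.symm hij, Finset.mem_univ j⟩⟩
    · intro h
      exact absurd (Finset.mem_erase.2 ⟨Ne.symm hij, Finset.mem_univ j⟩) h
  have split : (∑ i : Fin n, ∑ m ∈ (Finset.univ.erase i),
        ∏ k ∈ (Finset.univ.erase i).erase m, (b j - b k))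
      = (∑ m ∈ Finset.univ.erase j, ∏ k ∈ (Finset.univ.erase j).erase m, (b j - b k))
        + ∑ i ∈ Finset.univ.erase j, ∏ k ∈ (Finset.univ.erase j).erase i, (b j - b k) := by
    rw [← Finset.add_sum_erase _ _ (Finset.mem_univ j)]
    congr 1
    exact Finset.sum_congr rfl fun i hi => key i (Finset.mem_erase.1 hi).1
  calc _ = lc * ∑ i : Fin n, ∑ m ∈ (Finset.univ.erase i),
        ∏ k ∈ (Finset.univ.erase i).erase m, (b j - b k) := by
          congr 1
  _ = _ := by rw [split]; ring

/-! ### Factorization from N distinct roots -/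

lemma factor_of_roots (N : ℕ) (q : Polynomial ℂ) (hq : q ≠ 0) (hdeg : q.natDegree = N)
    (b : Fin N → ℂ) (hinj : Function.Injective b) (hroot : ∀ j, q.eval (b j) = 0) :
    q = Polynomial.C q.leadingCoeff * ∏ j, (Polynomial.X - Polynomial.C (b j)) := by
  have hsplit : (q.roots).card = q.natDegree :=
    (Polynomial.splits_iff_card_roots).1 (IsAlgClosed.splits q)
  set M : Multiset ℂ := Finset.univ.val.map b with hM
  have hnodup : M.Nodup := Multiset.Nodup.map hinj Finset.univ.nodup
  have hle : M ≤ q.roots := by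
    rw [Multiset.le_iff_count]
    intro x
    by_cases hx : x ∈ M
    · have h1 : M.count x = 1 := Multiset.count_eq_one_of_mem hnodup hx
      rw [h1, Polynomial.count_roots]
      rw [hM, Multiset.mem_map] at hx
      obtain ⟨j, _, rfl⟩ := hx
      exact (Polynomial.rootMultiplicity_pos hq).2 (hroot j)
    · rw [Multiset.count_eq_zero_of_notMem hx]; exact Nat.zero_le _
  have hcard : M.card = N := by rw [hM, Multiset.card_map]; simp
  have hMeq : M = q.roots := by
    refine Multiset.eq_of_le_of_card_le hle ?_
    rw [hcard, hsplit, hdeg]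
  have hpr := Polynomial.Splits.eq_prod_roots (IsAlgClosed.splits q)
  rw [← hMeq] at hpr
  calc q = Polynomial.C q.leadingCoeff
        * (Multiset.map (fun a => Polynomial.X - Polynomial.C a) M).prod := hpr
  _ = _ := by
      congr 1
      rw [hM, Multiset.map_map]
      rfl

/-! ### Coefficients and degree of the deformed polynomial -/

section
variable (N : ℕ) (p : Polynomial ℂ) (τ₀ : ℂ)

lemma mho_coeff (c : ℂ) (m : ℕ) :
    (multHeatOp N c p).coeff m
      = if m ≤ N then Complex.exp (c * ((m : ℂ) - N) * ((m : ℂ) + 1)) * p.coeff m else 0 := by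
  unfold multHeatOp
  rw [finset_sum_coeff]
  simp only [coeff_C_mul, coeff_X_pow, mul_ite, mul_one, mul_zero]
  rw [Finset.sum_ite_eq (Finset.range (N+1)) m]
  simp [Nat.lt_succ_iff]

lemma mho_natDegree (c : ℂ) (hp : p.coeff N ≠ 0) : (multHeatOp N c p).natDegree = N := by
  have h1 : (multHeatOp N c p).coeff N ≠ 0 := by
    rw [mho_coeff]
    simp only [le_refl, if_true, sub_self, mul_zero, zero_mul, Complex.exp_zero, one_mul]
    exact hp
  have h2 : (multHeatOp N c p).natDegree ≤ N := by
    refine Polynomial.natDegree_le_iff_coeff_eq_zero.2 fun m hm => ?_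
    rw [mho_coeff]
    simp [Nat.not_le.2 hm]
  exact le_antisymm h2 (Polynomial.le_natDegree_of_ne_zero h1)

lemma mho_leadingCoeff (c : ℂ) (hp : p.coeff N ≠ 0) :
    (multHeatOp N c p).leadingCoeff = p.coeff N := by
  rw [Polynomial.leadingCoeff, mho_natDegree N p c hp, mho_coeff]
  simp [sub_self]

lemma mho_ne_zero (c : ℂ) (hp : p.coeff N ≠ 0) : multHeatOp N c p ≠ 0 := by
  intro h
  have := mho_leadingCoeff N p c hp
  rw [h] at this
  simp at this
  exact hp this.symm

/-! ### The two-variable evaluation function and its partial derivatives -/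

noncomputable def muE (k : ℕ) : ℂ := -(((k : ℂ) - N) * ((k : ℂ) + 1)) / (2 * N)
noncomputable def nuE (k : ℕ) : ℂ := τ₀ * (((k : ℂ) - N) * ((k : ℂ) + 1)) / (2 * N)

lemma exponent_eq (hN : 0 < N) (τ : ℂ) (k : ℕ) :
    -(τ - τ₀) / (2 * N) * ((k : ℂ) - N) * ((k : ℂ) + 1) = muE N k * τ + nuE N τ₀ k := by
  have h : (N : ℂ) ≠ 0 := Nat.cast_ne_zero.2 hN.ne'
  simp only [muE, nuE]
  field_simp
  ring

noncomputable def qp (τ : ℂ) : Polynomial ℂ := multHeatOp N (-(τ - τ₀) / (2 * N)) p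

lemma qp_eq (hN : 0 < N) (τ : ℂ) :
    qp N p τ₀ τ = ∑ k ∈ Finset.range (N + 1),
      Polynomial.C (Complex.exp (muE N k * τ + nuE N τ₀ k) * p.coeff k) * Polynomial.X ^ k := by
  unfold qp multHeatOp
  refine Finset.sum_congr rfl fun k _ => ?_
  rw [exponent_eq N τ₀ hN τ k]

noncomputable def Fh (w : ℂ × ℂ) : ℂ :=
  ∑ k ∈ Finset.range (N + 1),
    Complex.exp (muE N k * w.1 + nuE N τ₀ k) * p.coeff k * w.2 ^ k

lemma Fh_eval (hN : 0 < N) (τ z : ℂ) : Fh N p τ₀ (τ, z) = (qp N p τ₀ τ).eval z := by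
  rw [qp_eq N p τ₀ hN τ]
  simp [Fh, eval_finset_sum]

noncomputable def Aa (τ x : ℂ) : ℂ :=
  ∑ k ∈ Finset.range (N + 1),
    Complex.exp (muE N k * τ + nuE N τ₀ k) * p.coeff k * (muE N k * x ^ k)

noncomputable def Bb (τ x : ℂ) : ℂ :=
  ∑ k ∈ Finset.range (N + 1),
    Complex.exp (muE N k * τ + nuE N τ₀ k) * p.coeff k * ((k : ℂ) * x ^ (k - 1))

lemma eval_deriv (hN : 0 < N) (τ x : ℂ) :
    (derivative (qp N p τ₀ τ)).eval x = Bb N p τ₀ τ x := by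
  rw [qp_eq N p τ₀ hN τ, derivative_sum]
  simp only [derivative_C_mul_X_pow, eval_finset_sum, eval_mul, eval_C, eval_pow, eval_X]
  exact Finset.sum_congr rfl fun k _ => by ring

lemma eval_deriv2 (hN : 0 < N) (τ x : ℂ) :
    (derivative (derivative (qp N p τ₀ τ))).eval x
      = ∑ k ∈ Finset.range (N + 1),
          Complex.exp (muE N k * τ + nuE N τ₀ k) * p.coeff k
            * ((k : ℂ) * ((k - 1 : ℕ) : ℂ) * x ^ (k - 1 - 1)) := by
  rw [qp_eq N p τ₀ hN τ, derivative_sum]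
  simp only [derivative_C_mul_X_pow, derivative_sum]
  simp only [derivative_C_mul_X_pow, eval_finset_sum, eval_mul, eval_C, eval_pow, eval_X]
  exact Finset.sum_congr rfl fun k _ => by ring

lemma key_A (hN : 0 < N) (τ x : ℂ) :
    Aa N p τ₀ τ x = -(1/(2*(N:ℂ))) *
      (x^2 * (derivative (derivative (qp N p τ₀ τ))).eval x
       - ((N:ℂ) - 2) * (x * (derivative (qp N p τ₀ τ)).eval x)
       - (N:ℂ) * (qp N p τ₀ τ).eval x) := by
  have hNc : (N : ℂ) ≠ 0 := Nat.cast_ne_zero.2 hN.ne'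
  rw [eval_deriv2 N p τ₀ hN, eval_deriv N p τ₀ hN, ← Fh_eval N p τ₀ hN]
  unfold Aa Bb Fh
  dsimp only
  simp only [Finset.mul_sum]
  rw [← Finset.sum_sub_distrib, ← Finset.sum_sub_distrib, Finset.mul_sum]
  refine Finset.sum_congr rfl fun k _ => ?_
  set a := Complex.exp (muE N k * τ + nuE N τ₀ k) * p.coeff k with ha
  unfold muE
  match k with
  | 0 => push_cast; field_simp; ring
  | 1 => push_cast; field_simp; ring
  | (m+2) =>
    push_cast
    field_simp
    ring

lemma term_strict (k : ℕ) (c μ ν : ℂ) (w : ℂ × ℂ) :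
    HasStrictFDerivAt (fun w : ℂ × ℂ => Complex.exp (μ * w.1 + ν) * c * w.2 ^ k)
      ((Complex.exp (μ * w.1 + ν) * c * (μ * w.2 ^ k)) • (ContinuousLinearMap.fst ℂ ℂ ℂ)
        + (Complex.exp (μ * w.1 + ν) * c * ((k : ℂ) * w.2 ^ (k - 1)))
            • (ContinuousLinearMap.snd ℂ ℂ ℂ)) w := by
  have hlin : HasStrictFDerivAt (fun w : ℂ × ℂ => μ * w.1 + ν)
      (μ • (ContinuousLinearMap.fst ℂ ℂ ℂ)) w :=
    (hasStrictFDerivAt_fst.const_mul μ).add_const ν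
  have hec := hlin.cexp.mul_const c
  have hpow : HasStrictFDerivAt (fun w : ℂ × ℂ => w.2 ^ k)
      (((k : ℂ) * w.2 ^ (k - 1)) • (ContinuousLinearMap.snd ℂ ℂ ℂ)) w :=
    HasStrictDerivAt.comp_hasStrictFDerivAt (𝕜 := ℂ) w
      (hasStrictDerivAt_pow k w.2) hasStrictFDerivAt_snd
  have h := hec.mul hpow
  refine h.congr_fderiv (Eq.symm ?_)
  refine ContinuousLinearMap.ext fun v => ?_
  simp only [ContinuousLinearMap.add_apply, ContinuousLinearMap.smul_apply,
    ContinuousLinearMap.coe_fst', ContinuousLinearMap.coe_snd', smul_eq_mul]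
  ring

lemma Fh_strict (t x : ℂ) :
    HasStrictFDerivAt (Fh N p τ₀)
      ((Aa N p τ₀ t x) • (ContinuousLinearMap.fst ℂ ℂ ℂ)
        + (Bb N p τ₀ t x) • (ContinuousLinearMap.snd ℂ ℂ ℂ)) (t, x) := by
  have hsum := HasStrictFDerivAt.fun_sum (u := Finset.range (N+1))
    (A := fun k (w : ℂ × ℂ) => Complex.exp (muE N k * w.1 + nuE N τ₀ k) * p.coeff k * w.2 ^ k)
    (A' := fun k =>
      (Complex.exp (muE N k * t + nuE N τ₀ k) * p.coeff k * (muE N k * x ^ k))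
          • (ContinuousLinearMap.fst ℂ ℂ ℂ)
        + (Complex.exp (muE N k * t + nuE N τ₀ k) * p.coeff k * ((k : ℂ) * x ^ (k - 1)))
          • (ContinuousLinearMap.snd ℂ ℂ ℂ))
    (x := (t, x)) (fun k _ => term_strict k (p.coeff k) (muE N k) (nuE N τ₀ k) (t, x))
  have hfun : (fun w : ℂ × ℂ => ∑ k ∈ Finset.range (N+1),
      Complex.exp (muE N k * w.1 + nuE N τ₀ k) * p.coeff k * w.2 ^ k) = Fh N p τ₀ := rfl
  rw [hfun] at hsum
  refine hsum.congr_fderiv (Eq.symm ?_)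
  refine ContinuousLinearMap.ext fun v => ?_
  simp only [ContinuousLinearMap.add_apply, ContinuousLinearMap.smul_apply,
    ContinuousLinearMap.coe_fst', ContinuousLinearMap.coe_snd', smul_eq_mul,
    ContinuousLinearMap.sum_apply, Aa, Bb]
  rw [Finset.sum_add_distrib, Finset.sum_mul, Finset.sum_mul]

end
end Stmt6Aux


open Stmt6Aux in
theorem stmt6 (N : ℕ) (hN : 0 < N) (p : Polynomial ℂ) (hdeg : p.natDegree = N)
    (τ₀ σ : ℂ)
    (hroots : ((multHeatOp N (-(σ - τ₀) / (2 * N)) p).roots).Nodup)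
    (hroots0 : (0 : ℂ) ∉ (multHeatOp N (-(σ - τ₀) / (2 * N)) p).roots) :
    ∃ V : Set ℂ, IsOpen V ∧ σ ∈ V ∧
      ∃ z : Fin N → ℂ → ℂ,
        (∀ j, DifferentiableOn ℂ (z j) V) ∧
        (∀ τ ∈ V,
          multHeatOp N (-(τ - τ₀) / (2 * N)) p
            = Polynomial.C p.leadingCoeff * ∏ j, (Polynomial.X - Polynomial.C (z j τ))) ∧
        (∀ τ ∈ V, ∀ j : Fin N, z j τ ≠ 0) ∧
        (∀ τ ∈ V, ∀ j k : Fin N, j ≠ k → z j τ ≠ z k τ) ∧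
        (∀ j : Fin N, ∀ τ ∈ V,
          HasDerivAt (z j)
            (z j τ * ((1 / (2 * (N : ℂ))) *
              (1 + ∑ k ∈ Finset.univ.erase j,
                (z j τ + z k τ) / (z j τ - z k τ)))) τ) := by
  classical
  have hNc : (N : ℂ) ≠ 0 := Nat.cast_ne_zero.2 hN.ne'
  have h2N : (2 * (N : ℂ)) ≠ 0 := mul_ne_zero two_ne_zero hNc
  have hp0 : p ≠ 0 := by
    intro h; rw [h, Polynomial.natDegree_zero] at hdeg; omega
  have hpN : p.coeff N ≠ 0 := by
    have := Polynomial.leadingCoeff_ne_zero.2 hp0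
    rwa [Polynomial.leadingCoeff, hdeg] at this
  have hlc : p.leadingCoeff = p.coeff N := by rw [Polynomial.leadingCoeff, hdeg]
  have hqdeg : ∀ τ, (qp N p τ₀ τ).natDegree = N := fun τ => mho_natDegree N p _ hpN
  have hqlc : ∀ τ, (qp N p τ₀ τ).leadingCoeff = p.coeff N := fun τ => mho_leadingCoeff N p _ hpN
  have hqne : ∀ τ, qp N p τ₀ τ ≠ 0 := fun τ => mho_ne_zero N p _ hpN
  have hroots' : (qp N p τ₀ σ).roots.Nodup := hroots
  have hroots0' : (0:ℂ) ∉ (qp N p τ₀ σ).roots := hroots0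
  -- enumeration of the roots at σ
  have hscard : (qp N p τ₀ σ).roots.toFinset.card = N := by
    rw [Multiset.toFinset_card_of_nodup hroots',
      (Polynomial.splits_iff_card_roots).1 (IsAlgClosed.splits _), hqdeg]
  set s : Finset ℂ := (qp N p τ₀ σ).roots.toFinset with hs
  set a : Fin N → ℂ := fun j => (s.equivFin.symm (Fin.cast hscard.symm j) : ℂ) with haa
  have ha_mem : ∀ j, a j ∈ (qp N p τ₀ σ).roots := fun j => by
    have := (s.equivFin.symm (Fin.cast hscard.symm j)).2
    exact Multiset.mem_toFinset.1 this
  have ha_inj : Function.Injective a := by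
    intro i j h
    have h1 : s.equivFin.symm (Fin.cast hscard.symm i)
        = s.equivFin.symm (Fin.cast hscard.symm j) := Subtype.coe_injective h
    have h2 := s.equivFin.symm.injective h1
    have h3 := congrArg Fin.val h2
    simp only [Fin.coe_cast] at h3
    exact Fin.ext h3
  have ha0 : ∀ j, a j ≠ 0 := fun j h => hroots0' (h ▸ ha_mem j)
  -- helper: the z-partial derivative is nonzero at simple roots
  have hBne : ∀ (τ : ℂ) (b : Fin N → ℂ), Function.Injective b →
      (qp N p τ₀ τ = Polynomial.C (p.coeff N) * ∏ k, (Polynomial.X - Polynomial.C (b k))) →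
      ∀ j, Bb N p τ₀ τ (b j) ≠ 0 := by
    intro τ b hbinj hfac j
    rw [← eval_deriv N p τ₀ hN, hfac, eval_deriv_prod]
    refine mul_ne_zero hpN (Finset.prod_ne_zero_iff.2 fun k hk => ?_)
    exact sub_ne_zero.2 fun h => (Finset.mem_erase.1 hk).1 (hbinj h).symm
  have hfacσ : qp N p τ₀ σ
      = Polynomial.C (p.coeff N) * ∏ k, (Polynomial.X - Polynomial.C (a k)) := by
    have h := factor_of_roots N (qp N p τ₀ σ) (hqne σ) (hqdeg σ) a ha_inj
      (fun j => Polynomial.isRoot_of_mem_roots (ha_mem j))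
    rwa [hqlc σ] at h
  -- local root functions near σ
  have hwj : ∀ j : Fin N, ∃ w : ℂ → ℂ, w σ = a j ∧ (∀ᶠ τ in nhds σ, ContinuousAt w τ) ∧
      (∀ᶠ τ in nhds σ, Fh N p τ₀ (τ, w τ) = 0) ∧
      HasDerivAt w (-(Aa N p τ₀ σ (a j) / Bb N p τ₀ σ (a j))) σ ∧
      (∀ u : ℂ → ℂ, ContinuousAt u σ → u σ = a j →
        (∀ᶠ τ in nhds σ, Fh N p τ₀ (τ, u τ) = 0) → u =ᶠ[nhds σ] w) := by
    intro j
    refine localRoot (Fh N p τ₀) (Aa N p τ₀) (Bb N p τ₀) (Fh_strict N p τ₀) σ (a j) ?_ ?_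
    · rw [Fh_eval N p τ₀ hN]; exact Polynomial.isRoot_of_mem_roots (ha_mem j)
    · exact hBne σ a ha_inj hfacσ j
  choose w hw1 hw2 hw3 _ _ using hwj
  have hcσ : ∀ j, ContinuousAt (w j) σ := fun j => (hw2 j).self_of_nhds
  -- the combined eventual property near σ
  have e1 : ∀ᶠ τ in nhds σ, ∀ j, ContinuousAt (w j) τ := Filter.eventually_all.2 hw2
  have e2 : ∀ᶠ τ in nhds σ, ∀ j, Fh N p τ₀ (τ, w j τ) = 0 := Filter.eventually_all.2 hw3
  have e3 : ∀ᶠ τ in nhds σ, ∀ i j : Fin N, i ≠ j → w i τ ≠ w j τ := by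
    refine Filter.eventually_all.2 fun i => Filter.eventually_all.2 fun j => ?_
    by_cases hij : i = j
    · exact Filter.Eventually.of_forall fun τ h => absurd hij h
    · have hne : w i σ - w j σ ≠ 0 := sub_ne_zero.2 (by
        rw [hw1 i, hw1 j]; exact fun h => hij (ha_inj h))
      have hev := ((hcσ i).sub (hcσ j)).eventually_ne hne
      filter_upwards [hev] with τ h _
      exact sub_ne_zero.1 h
  have e4 : ∀ᶠ τ in nhds σ, ∀ j, w j τ ≠ 0 := by
    refine Filter.eventually_all.2 fun j => ?_
    exact (hcσ j).eventually_ne (by rw [hw1 j]; exact ha0 j)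
  obtain ⟨V, hV, hVopen, hVσ⟩ := eventually_nhds_iff.1 (e1.and (e2.and (e3.and e4)))
  -- factorization on V
  have hVfac : ∀ τ ∈ V, qp N p τ₀ τ
      = Polynomial.C (p.coeff N) * ∏ j, (Polynomial.X - Polynomial.C (w j τ)) := by
    intro τ hτ
    obtain ⟨_, h2, h3, _⟩ := hV τ hτ
    have hinj : Function.Injective (fun j => w j τ) := by
      intro i j h
      by_contra hij
      exact h3 i j hij h
    have h := factor_of_roots N (qp N p τ₀ τ) (hqne τ) (hqdeg τ) (fun j => w j τ) hinj
      (fun j => by rw [← Fh_eval N p τ₀ hN]; exact h2 j)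
    rwa [hqlc τ] at h
  -- the derivative formula at every point of V
  have hder : ∀ j : Fin N, ∀ τ₁ ∈ V, HasDerivAt (w j)
      (w j τ₁ * ((1 / (2 * (N : ℂ))) *
        (1 + ∑ k ∈ Finset.univ.erase j, (w j τ₁ + w k τ₁) / (w j τ₁ - w k τ₁)))) τ₁ := by
    intro j τ₁ hτ₁
    obtain ⟨hc, hr, hdist, hnz⟩ := hV τ₁ hτ₁
    have hinj : Function.Injective (fun k => w k τ₁) := by
      intro i k h
      by_contra hik
      exact hdist i k hik h
    have hfacτ := hVfac τ₁ hτ₁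
    have hBτ : Bb N p τ₀ τ₁ (w j τ₁) ≠ 0 := hBne τ₁ (fun k => w k τ₁) hinj hfacτ j
    have hFτ : Fh N p τ₀ (τ₁, w j τ₁) = 0 := hr j
    obtain ⟨w', _, _, _, hw'4, hw'5⟩ :=
      localRoot (Fh N p τ₀) (Aa N p τ₀) (Bb N p τ₀) (Fh_strict N p τ₀) τ₁ (w j τ₁) hFτ hBτ
    have hroot' : ∀ᶠ τ in nhds τ₁, Fh N p τ₀ (τ, w j τ) = 0 := by
      filter_upwards [hVopen.mem_nhds hτ₁] with τ hτ
      exact (hV τ hτ).2.1 j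
    have heq : w j =ᶠ[nhds τ₁] w' := hw'5 (w j) (hc j) rfl hroot'
    have hD := hw'4.congr_of_eventuallyEq heq
    refine hD.congr_deriv (Eq.symm ?_)
    -- now the algebraic identification of the derivative
    have hdk : ∀ k ∈ Finset.univ.erase j, w j τ₁ - w k τ₁ ≠ 0 := fun k hk =>
      sub_ne_zero.2 fun h => (Finset.mem_erase.1 hk).1 (hinj h).symm
    have hPne : (∏ k ∈ Finset.univ.erase j, (w j τ₁ - w k τ₁)) ≠ 0 :=
      Finset.prod_ne_zero_iff.2 hdk
    have hBval : Bb N p τ₀ τ₁ (w j τ₁)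
        = p.coeff N * ∏ k ∈ Finset.univ.erase j, (w j τ₁ - w k τ₁) := by
      rw [← eval_deriv N p τ₀ hN, hfacτ]
      exact eval_deriv_prod N (fun k => w k τ₁) j (p.coeff N)
    have hSval : (Polynomial.derivative (Polynomial.derivative (qp N p τ₀ τ₁))).eval (w j τ₁)
        = 2 * p.coeff N * ((∏ k ∈ Finset.univ.erase j, (w j τ₁ - w k τ₁))
            * ∑ k ∈ Finset.univ.erase j, (w j τ₁ - w k τ₁)⁻¹) := by
      rw [hfacτ]
      refine (eval_deriv2_prod N (fun k => w k τ₁) j (p.coeff N)).trans ?_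
      congr 1
      rw [Finset.mul_sum]
      refine Finset.sum_congr rfl fun m hm => ?_
      have h := Finset.mul_prod_erase (Finset.univ.erase j) (fun k => w j τ₁ - w k τ₁) hm
      have hm0 := hdk m hm
      field_simp
      rw [← h]
      ring
    have hEval0 : (qp N p τ₀ τ₁).eval (w j τ₁) = 0 := by
      rw [← Fh_eval N p τ₀ hN]; exact hFτ
    have hAval : Aa N p τ₀ τ₁ (w j τ₁)
        = -(1/(2*(N:ℂ))) * ((w j τ₁)^2 * (2 * p.coeff N
              * ((∏ k ∈ Finset.univ.erase j, (w j τ₁ - w k τ₁))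
                * ∑ k ∈ Finset.univ.erase j, (w j τ₁ - w k τ₁)⁻¹))
            - ((N:ℂ) - 2) * (w j τ₁ * (p.coeff N
              * ∏ k ∈ Finset.univ.erase j, (w j τ₁ - w k τ₁)))) := by
      rw [key_A N p τ₀ hN, hSval, hEval0, eval_deriv N p τ₀ hN, hBval]
      ring
    have hcount : ((Finset.univ.erase j).card : ℂ) = (N:ℂ) - 1 := by
      rw [Finset.card_erase_of_mem (Finset.mem_univ j), Finset.card_univ, Fintype.card_fin,
        Nat.cast_sub hN, Nat.cast_one]
    have hsum : ∑ k ∈ Finset.univ.erase j, (w j τ₁ + w k τ₁) / (w j τ₁ - w k τ₁)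
        = 2 * w j τ₁ * (∑ k ∈ Finset.univ.erase j, (w j τ₁ - w k τ₁)⁻¹) - ((N:ℂ) - 1) := by
      calc ∑ k ∈ Finset.univ.erase j, (w j τ₁ + w k τ₁) / (w j τ₁ - w k τ₁)
          = ∑ k ∈ Finset.univ.erase j, (2 * w j τ₁ * (w j τ₁ - w k τ₁)⁻¹ - 1) := by
            refine Finset.sum_congr rfl fun k hk => ?_
            have h0 := hdk k hk
            field_simp
            ring
      _ = _ := by
            rw [Finset.sum_sub_distrib, Finset.sum_const, ← Finset.mul_sum, nsmul_eq_mul,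
              mul_one, hcount]
    rw [hsum, hAval, hBval]
    field_simp
    ring
  -- assemble
  refine ⟨V, hVopen, hVσ, w, ?_, ?_, ?_, ?_, hder⟩
  · exact fun j τ hτ => ((hder j τ hτ).differentiableAt).differentiableWithinAt
  · intro τ hτ
    rw [hlc]
    exact hVfac τ hτ
  · exact fun τ hτ j => (hV τ hτ).2.2.2 j
  · exact fun τ hτ j k hjk => (hV τ hτ).2.2.1 j k hjk
end

section
/- Let N be a positive integer, U ⊆ ℂ a connected open set, and z_1, …, z_N : U → ℂ holomorphic functions whose values are pairwise distinct for each τ ∈ U and which satisfy z_j'(τ) = −(1/N) ∑_{k ≠ j} 1/(z_j(τ) − z_k(τ)) for all j and all τ ∈ U. Define q_τ(z) = ∏_{j=1}^{N} (z − z_j(τ)). Then q satisfies the heat equation: for every τ ∈ U and every z ∈ ℂ, the complex derivative of the map τ ↦ q_τ(z) exists and equals (1/(2N)) ∂²q_τ/∂z² evaluated at z. -/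
open Finset

private lemma swap_erase_sum {N : ℕ} {M : Type*} [AddCommMonoid M] (g : Fin N → Fin N → M) :
    ∑ j, ∑ k ∈ Finset.univ.erase j, g j k = ∑ j, ∑ k ∈ Finset.univ.erase j, g k j := by
  simp_rw [← Finset.filter_ne' Finset.univ _, Finset.sum_filter]
  rw [Finset.sum_comm]
  refine Finset.sum_congr rfl fun j _ => Finset.sum_congr rfl fun k _ => ?_
  simp [ne_comm]

theorem stmt12 (N : ℕ) (hN : 0 < N) (U : Set ℂ) (hU : IsOpen U)
    (hconn : IsConnected U)
    (z : Fin N → ℂ → ℂ)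
    (hdist : ∀ τ ∈ U, ∀ j k : Fin N, j ≠ k → z j τ ≠ z k τ)
    (hode : ∀ j : Fin N, ∀ τ ∈ U,
      HasDerivAt (z j)
        (-(1 / (N : ℂ)) * ∑ k ∈ Finset.univ.erase j, 1 / (z j τ - z k τ)) τ)
    (τ : ℂ) (hτ : τ ∈ U) (w : ℂ) :
    HasDerivAt (fun σ => ∏ j, (w - z j σ))
      ((1 / (2 * (N : ℂ))) * deriv (deriv (fun u => ∏ j, (u - z j τ))) w) τ := by
  have hNne : (N : ℂ) ≠ 0 := Nat.cast_ne_zero.mpr hN.ne'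
  set zz : Fin N → ℂ := fun j => z j τ with hzz
  set P : Fin N → ℂ := fun j => ∏ m ∈ Finset.univ.erase j, (w - zz m) with hP
  set Q : Fin N → Fin N → ℂ :=
    fun j k => ∏ m ∈ (Finset.univ.erase j).erase k, (w - zz m) with hQ
  -- first derivative of q
  have hq1 : deriv (fun u => ∏ j, (u - z j τ)) =
      fun u => ∑ j, ∏ m ∈ Finset.univ.erase j, (u - zz m) := by
    funext u
    have h := HasDerivAt.fun_finsetProd (u := (Finset.univ : Finset (Fin N)))
      (f := fun j v => v - zz j) (f' := fun _ => 1) (x := u)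
      (fun i _ => (hasDerivAt_id u).sub_const (zz i))
    simpa using h.deriv
  -- second derivative of q at w
  have hq2 : deriv (deriv (fun u => ∏ j, (u - z j τ))) w =
      ∑ j, ∑ k ∈ Finset.univ.erase j, Q j k := by
    rw [hq1]
    have h : HasDerivAt (fun u => ∑ j, ∏ m ∈ Finset.univ.erase j, (u - zz m))
        (∑ j, ∑ k ∈ Finset.univ.erase j, Q j k) w := by
      refine HasDerivAt.fun_sum fun j _ => ?_
      have h2 := HasDerivAt.fun_finsetProd (u := Finset.univ.erase j)
        (f := fun m v => v - zz m) (f' := fun _ => 1) (x := w)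
        (fun i _ => (hasDerivAt_id w).sub_const (zz i))
      simpa [Q] using h2
    exact h.deriv
  -- derivative in τ
  have hD : HasDerivAt (fun σ => ∏ j, (w - z j σ))
      (∑ j, P j * ((1 / (N : ℂ)) * ∑ k ∈ Finset.univ.erase j, 1 / (zz j - zz k))) τ := by
    have h := HasDerivAt.fun_finsetProd (u := (Finset.univ : Finset (Fin N)))
      (f := fun j σ => w - z j σ)
      (f' := fun j => (1 / (N : ℂ)) * ∑ k ∈ Finset.univ.erase j, 1 / (zz j - zz k)) (x := τ)
      (fun j _ => by
        have h3 := ((hode j τ hτ).const_sub w)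
        have he : -(-(1 / (N : ℂ)) * ∑ k ∈ Finset.univ.erase j, 1 / (z j τ - z k τ))
            = (1 / (N : ℂ)) * ∑ k ∈ Finset.univ.erase j, 1 / (z j τ - z k τ) := by ring
        rw [he] at h3
        exact h3)
    simpa [P] using h
  -- key pair identity
  have hkey : ∀ j k : Fin N, k ≠ j →
      P j * (1 / (zz j - zz k)) + P k * (1 / (zz k - zz j)) = Q j k := by
    intro j k hkj
    have hne : zz j - zz k ≠ 0 := sub_ne_zero.mpr (hdist τ hτ j k hkj.symm)
    have hne' : zz k - zz j ≠ 0 := sub_ne_zero.mpr (hdist τ hτ k j hkj)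
    have hPj : P j = (w - zz k) * Q j k := by
      show (∏ m ∈ Finset.univ.erase j, (w - zz m)) =
        (w - zz k) * ∏ m ∈ (Finset.univ.erase j).erase k, (w - zz m)
      exact (Finset.mul_prod_erase _ _ (by simp [hkj])).symm
    have hPk : P k = (w - zz j) * Q j k := by
      show (∏ m ∈ Finset.univ.erase k, (w - zz m)) =
        (w - zz j) * ∏ m ∈ (Finset.univ.erase j).erase k, (w - zz m)
      rw [Finset.erase_right_comm]
      exact (Finset.mul_prod_erase _ _ (by simp [hkj.symm])).symm
    rw [hPj, hPk]
    field_simp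
    ring
  -- sum identity
  have hsum : ∑ j, P j * ((1 / (N : ℂ)) * ∑ k ∈ Finset.univ.erase j, 1 / (zz j - zz k))
      = (1 / (2 * (N : ℂ))) * ∑ j, ∑ k ∈ Finset.univ.erase j, Q j k := by
    have hA : (∑ j, ∑ k ∈ Finset.univ.erase j, P j * (1 / (zz j - zz k))) +
        (∑ j, ∑ k ∈ Finset.univ.erase j, P j * (1 / (zz j - zz k)))
        = ∑ j, ∑ k ∈ Finset.univ.erase j, Q j k := by
      nth_rewrite 2 [swap_erase_sum]
      rw [← Finset.sum_add_distrib]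
      refine Finset.sum_congr rfl fun j _ => ?_
      rw [← Finset.sum_add_distrib]
      exact Finset.sum_congr rfl fun k hk => hkey j k (Finset.ne_of_mem_erase hk)
    rw [← hA]
    simp_rw [Finset.mul_sum, ← mul_assoc, mul_comm (P _) (1 / (N:ℂ)), mul_assoc,
      ← Finset.mul_sum]
    field_simp
    ring
  rw [hq2, ← hsum]
  exact hD
end

section
/- Let μ be the uniform probability measure on the closed unit disk {w ∈ ℂ : |w| ≤ 1}. Then for every z ∈ ℂ with |z| < 1, the function w ↦ 1/(z − w) is integrable with respect to μ and ∫_ℂ 1/(z − w) dμ(w) = z̄, the complex conjugate of z. -/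
open MeasureTheory

section Stmt16AuxSection

open Set Metric Real

noncomputable section

namespace Stmt16Aux

def Bmat (p : ℝ × ℝ) : ℝ × ℝ →L[ℝ] ℝ × ℝ :=
  LinearMap.toContinuousLinearMap (Matrix.toLin (Module.Basis.finTwoProd ℝ) (Module.Basis.finTwoProd ℝ)
    !![Real.cos p.2, -p.1 * Real.sin p.2; Real.sin p.2, p.1 * Real.cos p.2])

lemma Bmat_det (p : ℝ × ℝ) : (Bmat p).det = p.1 := by
  conv_rhs => rw [← one_mul p.1, ← Real.cos_sq_add_sin_sq p.2]
  simp only [Bmat, neg_mul, LinearMap.det_toContinuousLinearMap, LinearMap.det_toLin,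
    Matrix.det_fin_two_of, sub_neg_eq_add]
  ring

lemma hasFDeriv (p : ℝ × ℝ) : HasFDerivAt polarCoord.symm (Bmat p) p :=
  hasFDerivAt_polarCoord_symm p

lemma comp_eq (p : ℝ × ℝ) :
    Complex.measurableEquivRealProd.symm (polarCoord.symm p) = Complex.polarCoord.symm p := rfl

lemma S_eq (R : ℝ) :
    polarCoord.target ∩
      polarCoord.symm ⁻¹' (Complex.measurableEquivRealProd.symm ⁻¹' (closedBall (0:ℂ) R))
      = Ioc 0 R ×ˢ Ioo (-π) π := by
  ext p
  simp only [polarCoord_target, mem_inter_iff, mem_prod, mem_preimage, mem_closedBall,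
    Complex.dist_eq, sub_zero, comp_eq, Complex.norm_polarCoord_symm, mem_Ioi, mem_Ioo, mem_Ioc]
  constructor
  · rintro ⟨⟨h1, h2⟩, h3⟩
    exact ⟨⟨h1, by rwa [abs_of_pos h1] at h3⟩, h2⟩
  · rintro ⟨⟨h1, h1'⟩, h2⟩
    exact ⟨⟨h1, h2⟩, by rwa [abs_of_pos h1]⟩

lemma image_polar (R : ℝ) :
    polarCoord.symm '' (Ioc 0 R ×ˢ Ioo (-π) π) =
      polarCoord.source ∩ (Complex.measurableEquivRealProd.symm ⁻¹' (closedBall (0:ℂ) R)) := by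
  rw [← S_eq, Set.image_inter_preimage, polarCoord.symm_image_target_eq_source]

end Stmt16Aux

namespace Stmt16Aux

variable {E : Type*} [NormedAddCommGroup E] [NormedSpace ℝ E]

lemma measurableSet_S (R : ℝ) : MeasurableSet (Ioc (0:ℝ) R ×ˢ Ioo (-π) π) :=
  measurableSet_Ioc.prod measurableSet_Ioo

lemma injOn_S (R : ℝ) : Set.InjOn polarCoord.symm (Ioc (0:ℝ) R ×ˢ Ioo (-π) π) := by
  apply polarCoord.symm.injOn.mono
  rw [polarCoord.symm_source]
  rintro ⟨r, θ⟩ ⟨h1, h2⟩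
  exact ⟨h1.1, h2⟩

lemma restrict_cb_eq (R : ℝ) (f : ℂ → E) :
    IntegrableOn f (closedBall (0:ℂ) R) ↔
      IntegrableOn (fun p : ℝ × ℝ => f (Complex.measurableEquivRealProd.symm p))
        (Complex.measurableEquivRealProd.symm ⁻¹' (closedBall (0:ℂ) R)) := by
  have mp := Complex.volume_preserving_equiv_real_prod.symm
  exact ((mp.restrict_preimage_emb Complex.measurableEquivRealProd.symm.measurableEmbedding
    (closedBall (0:ℂ) R)).integrable_comp_emb
    Complex.measurableEquivRealProd.symm.measurableEmbedding).symm

lemma key_ae (R : ℝ) :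
    ((polarCoord.source ∩ (Complex.measurableEquivRealProd.symm ⁻¹' (closedBall (0:ℂ) R))
      : Set (ℝ × ℝ)))
      =ᵐ[volume] ((Complex.measurableEquivRealProd.symm ⁻¹' (closedBall (0:ℂ) R) : Set (ℝ × ℝ))) := by
  have h : polarCoord.source =ᵐ[volume] (univ : Set (ℝ × ℝ)) := polarCoord_source_ae_eq_univ
  exact (h.inter (Filter.EventuallyEq.rfl)).trans (by rw [Set.univ_inter]; exact Filter.EventuallyEq.rfl)

theorem integrableOn_cb_iff_polar (R : ℝ) (f : ℂ → E) :
    IntegrableOn f (closedBall (0:ℂ) R) ↔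
      IntegrableOn (fun p : ℝ × ℝ => p.1 • f (Complex.polarCoord.symm p))
        (Ioc 0 R ×ˢ Ioo (-π) π) := by
  rw [restrict_cb_eq, IntegrableOn, ← Measure.restrict_congr_set (key_ae R), ← IntegrableOn,
    ← image_polar,
    integrableOn_image_iff_integrableOn_abs_det_fderiv_smul volume (measurableSet_S R)
      (fun p _ => (hasFDeriv p).hasFDerivWithinAt) (injOn_S R)]
  apply integrableOn_congr_fun _ (measurableSet_S R)
  rintro ⟨r, θ⟩ ⟨h1, _⟩
  simp only [Bmat_det, abs_of_pos h1.1, comp_eq]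

theorem integral_cb_polar (R : ℝ) (f : ℂ → E) :
    ∫ w in closedBall (0:ℂ) R, f w =
      ∫ p in Ioc (0:ℝ) R ×ˢ Ioo (-π) π, p.1 • f (Complex.polarCoord.symm p) := by
  have mp := Complex.volume_preserving_equiv_real_prod.symm
  rw [← (mp.restrict_preimage_emb Complex.measurableEquivRealProd.symm.measurableEmbedding
      (closedBall (0:ℂ) R)).integral_comp Complex.measurableEquivRealProd.symm.measurableEmbedding,
    ← setIntegral_congr_set (key_ae R), ← image_polar,
    integral_image_eq_integral_abs_det_fderiv_smul volume (measurableSet_S R)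
      (fun p _ => (hasFDeriv p).hasFDerivWithinAt) (injOn_S R)]
  apply setIntegral_congr_fun (measurableSet_S R)
  rintro ⟨r, θ⟩ ⟨h1, _⟩
  simp only [Bmat_det, abs_of_pos h1.1, comp_eq]

end Stmt16Aux

namespace Stmt16Aux

lemma pc_eq (p : ℝ × ℝ) :
    (Complex.polarCoord.symm p : ℂ) = (p.1 : ℂ) * Complex.exp (p.2 * Complex.I) := by
  rw [Complex.polarCoord_symm_apply, Complex.exp_mul_I]
  push_cast
  ring

lemma meas_integrand {g : ℂ → ℂ} (hg : Measurable g) :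
    Measurable (fun p : ℝ × ℝ => p.1 • g (Complex.polarCoord.symm p)) := by
  have hc : Continuous (fun p : ℝ × ℝ => (Complex.polarCoord.symm p : ℂ)) := by
    simp only [pc_eq]
    exact (Complex.continuous_ofReal.comp continuous_fst).mul
      (Complex.continuous_exp.comp ((Complex.continuous_ofReal.comp continuous_snd).mul
        continuous_const))
  exact measurable_fst.smul (hg.comp hc.measurable)

lemma volume_S_lt_top (R : ℝ) : volume (Ioc (0:ℝ) R ×ˢ Ioo (-π) π) < ⊤ := by
  rw [Measure.volume_eq_prod, Measure.prod_prod]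
  exact ENNReal.mul_lt_top (by simp) (by simp)

lemma intOn_inv (R : ℝ) : IntegrableOn (fun w : ℂ => 1 / w) (closedBall (0:ℂ) R) := by
  rw [integrableOn_cb_iff_polar]
  have hm : Measurable (fun p : ℝ × ℝ => p.1 • (1 / (Complex.polarCoord.symm p) : ℂ)) :=
    meas_integrand (measurable_const.div measurable_id)
  refine Integrable.mono' (g := fun _ => (1:ℝ))
    (integrableOn_const (volume_S_lt_top R).ne) hm.aestronglyMeasurable ?_
  filter_upwards [ae_restrict_mem (measurableSet_S R)] with p hp
  rcases hp with ⟨h1, _⟩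
  rw [norm_smul, one_div, norm_inv, Complex.norm_polarCoord_symm,
    Real.norm_eq_abs, abs_of_pos h1.1]
  exact le_of_eq (mul_inv_cancel₀ (ne_of_gt h1.1))

lemma intOn_sub_inv (z : ℂ) (R : ℝ) :
    IntegrableOn (fun w : ℂ => 1 / (z - w)) (closedBall z R) := by
  have emb : MeasurableEmbedding (fun u : ℂ => z + u) :=
    (MeasurableEquiv.addLeft z).measurableEmbedding
  have mp : MeasurePreserving (fun u : ℂ => z + u) volume volume :=
    measurePreserving_add_left volume z
  have hpre : (fun u : ℂ => z + u) ⁻¹' closedBall z R = closedBall (0:ℂ) R := by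
    ext u
    simp [mem_closedBall, Complex.dist_eq, add_sub_cancel_left]
  have h2 : IntegrableOn ((fun w : ℂ => 1 / (z - w)) ∘ (fun u : ℂ => z + u))
      (closedBall (0:ℂ) R) := by
    have : ((fun w : ℂ => 1 / (z - w)) ∘ (fun u : ℂ => z + u)) = fun u : ℂ => -(1 / u) := by
      funext u
      simp only [Function.comp_apply]
      rw [sub_add_cancel_left, div_neg, one_div]
    rw [this]
    exact (intOn_inv R).neg
  have := (mp.restrict_preimage_emb emb (closedBall z R)).integrable_comp_emb emb
    (g := fun w : ℂ => 1 / (z - w))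
  rw [hpre] at this
  exact this.1 h2

end Stmt16Aux

namespace Stmt16Aux

open Complex in
lemma circleInt_eval (z : ℂ) {r : ℝ} (h0 : 0 < r) (hne : r ≠ ‖z‖) :
    (∮ w in C(0, r), w⁻¹ * (z - w)⁻¹) =
      if r < ‖z‖ then 2 * π * Complex.I / z else 0 := by
  rcases eq_or_ne z 0 with rfl | hz
  · rw [if_neg (by simp [not_lt, h0.le])]
    have heq : Set.EqOn (fun w : ℂ => w⁻¹ * (0 - w)⁻¹)
        (fun w : ℂ => (-1 : ℂ) * ((w - 0) ^ (-2 : ℤ))) (sphere (0:ℂ) r) := by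
      intro w hw
      have hw0 : w ≠ 0 := by
        simp only [mem_sphere_iff_norm, sub_zero] at hw
        intro h; rw [h] at hw; simp at hw; exact h0.ne' hw.symm
      simp only [zero_sub, sub_zero, zpow_neg, inv_mul_eq_div]
      field_simp
    rw [circleIntegral.integral_congr h0.le heq, circleIntegral.integral_const_mul,
      circleIntegral.integral_sub_zpow_of_ne (by decide) _ _ _, mul_zero]
  · have hrne : r ≠ 0 := h0.ne'
    have h0sphere : (0:ℂ) ∉ sphere (0:ℂ) |r| := by
      simp only [mem_sphere_iff_norm, sub_zero, norm_zero, abs_of_pos h0]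
      exact h0.ne
    have hzsphere : z ∉ sphere (0:ℂ) |r| := by
      simp only [mem_sphere_iff_norm, sub_zero, abs_of_pos h0]
      exact fun h => hne h.symm
    have h1 : CircleIntegrable (fun w : ℂ => (w - 0)⁻¹) 0 r :=
      circleIntegrable_sub_inv_iff.2 (Or.inr h0sphere)
    have h2 : CircleIntegrable (fun w : ℂ => (w - z)⁻¹) 0 r :=
      circleIntegrable_sub_inv_iff.2 (Or.inr hzsphere)
    have heq : Set.EqOn (fun w : ℂ => w⁻¹ * (z - w)⁻¹)
        (fun w : ℂ => z⁻¹ * ((w - 0)⁻¹ - (w - z)⁻¹)) (sphere (0:ℂ) r) := by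
      intro w hw
      simp only [mem_sphere_iff_norm, sub_zero] at hw
      have hw0 : w ≠ 0 := fun h => by rw [h] at hw; simp at hw; exact h0.ne' hw.symm
      have hwz : w ≠ z := fun h => hne (by rw [← h, hw])
      have hzw : z - w ≠ 0 := sub_ne_zero.2 (Ne.symm hwz)
      have hwz' : w - z ≠ 0 := sub_ne_zero.2 hwz
      simp only [sub_zero]
      field_simp
      ring
    rw [circleIntegral.integral_congr h0.le heq, circleIntegral.integral_const_mul,
      circleIntegral.integral_sub h1 h2,
      circleIntegral.integral_sub_inv_of_mem_ball (by simpa [mem_ball] using h0)]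
    rcases lt_or_gt_of_ne hne with hlt | hgt
    · -- r < |z| : second integral is zero
      rw [if_pos hlt]
      have hzero : (∮ w in C(0, r), (w - z)⁻¹) = 0 := by
        refine Complex.circleIntegral_eq_zero_of_differentiable_on_off_countable h0.le
          Set.countable_empty ?_ ?_
        · refine ContinuousOn.inv₀ (continuous_id.sub continuous_const).continuousOn ?_
          intro w hw h
          rw [sub_eq_zero] at h
          subst h
          simp only [mem_closedBall, Complex.dist_eq, sub_zero] at hw
          exact absurd hw (not_le.2 hlt)
        · rintro w ⟨hw, -⟩
          refine DifferentiableAt.inv (differentiableAt_id.sub (differentiableAt_const _)) ?_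
          intro h
          rw [sub_eq_zero] at h
          subst h
          simp only [mem_ball, Complex.dist_eq, sub_zero] at hw
          exact absurd hw (not_lt.2 hlt.le)
      rw [hzero, sub_zero]
      ring
    · -- |z| < r : second integral is 2 π I
      rw [if_neg (not_lt.2 hgt.le),
        circleIntegral.integral_sub_inv_of_mem_ball (by simpa [mem_ball, Complex.dist_eq] using hgt),
        sub_self, mul_zero]

end Stmt16Aux

namespace Stmt16Aux

lemma angular (z : ℂ) {r : ℝ} (h0 : 0 < r) (hne : r ≠ ‖z‖) :
    ∫ θ in Ioo (-π) π, (z - (r:ℂ) * Complex.exp (θ * Complex.I))⁻¹ =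
      if r < ‖z‖ then 2 * π / z else 0 := by
  set g : ℝ → ℂ := fun θ => (z - (r:ℂ) * Complex.exp (θ * Complex.I))⁻¹ with hg
  have per : Function.Periodic g (2 * π) := by
    intro θ
    simp only [hg]
    congr 2
    push_cast
    rw [add_mul, Complex.exp_add, Complex.exp_two_pi_mul_I, mul_one]
  have step1 : ∫ θ in Ioo (-π) π, g θ = ∫ θ in (0:ℝ)..(2*π), g θ := by
    rw [Measure.restrict_congr_set Ioo_ae_eq_Ioc,
      ← intervalIntegral.integral_of_le (by linarith [Real.pi_pos] : -π ≤ π)]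
    have := per.intervalIntegral_add_eq (-π) 0
    rw [zero_add] at this
    have h2 : -π + 2 * π = π := by ring
    rw [h2] at this
    exact this.symm ▸ rfl
  have key : (∮ w in C(0, r), w⁻¹ * (z - w)⁻¹) = Complex.I * ∫ θ in (0:ℝ)..(2*π), g θ := by
    rw [circleIntegral, ← intervalIntegral.integral_const_mul]
    apply intervalIntegral.integral_congr
    intro θ _
    have hne0 : (circleMap 0 r θ : ℂ) ≠ 0 := circleMap_ne_center h0.ne'
    rw [circleMap_zero] at hne0
    simp only [deriv_circleMap, smul_eq_mul, circleMap_zero, hg]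
    rw [mul_comm ((r:ℂ) * Complex.exp (θ * Complex.I)) Complex.I, mul_assoc,
      mul_inv_cancel_left₀ hne0]
  rw [step1, ← inv_mul_cancel_left₀ Complex.I_ne_zero (∫ θ in (0:ℝ)..(2*π), g θ), ← key,
    circleInt_eval z h0 hne]
  split_ifs
  · rw [Complex.inv_I]
    field_simp
    rw [Complex.I_sq]
    ring
  · simp

end Stmt16Aux

namespace Stmt16Aux

lemma main_integral (z : ℂ) (hz : ‖z‖ < 1) :
    ∫ w in closedBall (0:ℂ) 1, 1 / (z - w) = (π : ℂ) * (starRingEnd ℂ) z := by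
  have hInt : IntegrableOn (fun w : ℂ => 1 / (z - w)) (closedBall (0:ℂ) 1) := by
    apply (intOn_sub_inv z 2).mono_set
    intro w hw
    simp only [mem_closedBall, Complex.dist_eq, sub_zero] at *
    calc ‖w - z‖ ≤ ‖w‖ + ‖z‖ := by
          simpa using norm_sub_le w z
      _ ≤ 2 := by linarith [hz.le]
  have hs0 : 0 ≤ ‖z‖ := norm_nonneg z
  set F : ℝ × ℝ → ℂ := fun p => p.1 • (1 / (z - (p.1 : ℂ) * Complex.exp (p.2 * Complex.I)))
    with hF
  have hFeq : (fun p : ℝ × ℝ => p.1 • (1 / (z - Complex.polarCoord.symm p))) = F := by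
    funext p
    rw [hF, pc_eq]
  have hi : Integrable F
      ((volume.restrict (Ioc (0:ℝ) 1)).prod (volume.restrict (Ioo (-π) π))) := by
    have h := (integrableOn_cb_iff_polar 1 (fun w : ℂ => 1 / (z - w))).1 hInt
    rw [IntegrableOn, Measure.volume_eq_prod, ← Measure.prod_restrict, hFeq] at h
    exact h
  rw [integral_cb_polar 1 (fun w : ℂ => 1 / (z - w)), hFeq, Measure.volume_eq_prod,
    ← Measure.prod_restrict, MeasureTheory.integral_prod _ hi]
  set G : ℝ → ℂ := fun r => if r < ‖z‖ then (r : ℂ) * (2 * π / z) else 0 with hG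
  have hae : ∀ᵐ r ∂(volume.restrict (Ioc (0:ℝ) 1)),
      (∫ θ in Ioo (-π) π, F (r, θ)) = G r := by
    have h1 : ∀ᵐ (r : ℝ) ∂(volume.restrict (Ioc (0:ℝ) 1)), r ≠ ‖z‖ := by
      apply ae_restrict_of_ae
      have h2 : volume ({‖z‖} : Set ℝ) = 0 := measure_singleton _
      filter_upwards [measure_eq_zero_iff_ae_notMem.mp h2] with r hr
      simpa using hr
    filter_upwards [ae_restrict_mem measurableSet_Ioc, h1] with r hr hner
    simp only [hF, one_div]
    rw [integral_smul, angular z hr.1 hner]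
    simp only [hG]
    split_ifs with h
    · rw [Complex.real_smul]
    · rw [smul_zero]
  rw [integral_congr_ae hae]
  -- now compute the radial integral
  have hGmeas : Measurable G := by
    apply Measurable.ite (measurableSet_Iio (a := ‖z‖)) _ measurable_const
    exact (Complex.measurable_ofReal.mul_const _)
  have hGint : IntegrableOn G (Ioc (0:ℝ) 1) := by
    refine Integrable.mono' (g := fun _ => ‖(2 * (π:ℂ) / z)‖)
      (integrableOn_const (by simp)) hGmeas.aestronglyMeasurable ?_
    filter_upwards [ae_restrict_mem measurableSet_Ioc] with r hr
    simp only [hG]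
    split_ifs with h
    · rw [norm_mul]
      have hr1 : ‖(r:ℂ)‖ ≤ 1 := by
        rw [Complex.norm_real, Real.norm_eq_abs, abs_of_pos hr.1]
        exact hr.2
      calc ‖(r:ℂ)‖ * ‖2 * (π:ℂ) / z‖ ≤ 1 * ‖2 * (π:ℂ) / z‖ :=
            mul_le_mul_of_nonneg_right hr1 (norm_nonneg _)
        _ = ‖2 * (π:ℂ) / z‖ := one_mul _
    · simp only [norm_zero]
      positivity
  have hsplit : Ioc (0:ℝ) 1 = Ioc 0 (‖z‖) ∪ Ioc (‖z‖) 1 :=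
    (Ioc_union_Ioc_eq_Ioc hs0 hz.le).symm
  rw [hsplit, setIntegral_union (Ioc_disjoint_Ioc_of_le le_rfl) measurableSet_Ioc
    (hGint.mono_set (by rw [hsplit]; exact subset_union_left))
    (hGint.mono_set (by rw [hsplit]; exact subset_union_right))]
  have hzero : ∫ r in Ioc (‖z‖) 1, G r = 0 := by
    rw [setIntegral_congr_fun measurableSet_Ioc
      (fun r hr => if_neg (not_lt.2 hr.1.le) : ∀ r ∈ Ioc (‖z‖) 1, G r = 0)]
    simp
  have hfirst : ∫ r in Ioc (0:ℝ) (‖z‖), G r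
      = ((((‖z‖)^2 - 0^2)/2 : ℝ) : ℂ) * (2 * π / z) := by
    rw [← Measure.restrict_congr_set Ioo_ae_eq_Ioc,
      setIntegral_congr_fun measurableSet_Ioo
        (fun r hr => if_pos hr.2 :
          ∀ r ∈ Ioo (0:ℝ) (‖z‖), G r = (r:ℂ) * (2 * π / z)),
      MeasureTheory.integral_mul_const]
    congr 1
    rw [Measure.restrict_congr_set Ioo_ae_eq_Ioc,
      ← intervalIntegral.integral_of_le hs0, intervalIntegral.integral_ofReal,
      integral_id]
  rw [hzero, hfirst, add_zero]
  rcases eq_or_ne z 0 with rfl | hzne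
  · simp
  · have habs : ((‖z‖ : ℝ) : ℂ)^2 = z * (starRingEnd ℂ) z := by
      rw [Complex.mul_conj, ← Complex.sq_norm]
      norm_cast
    rw [show ((((‖z‖)^2 - 0^2)/2 : ℝ) : ℂ) = ((‖z‖ : ℝ) : ℂ)^2/2 by
      push_cast; ring]
    rw [show ((‖z‖ : ℝ) : ℂ)^2/2 * (2 * π / z)
        = ((‖z‖ : ℝ) : ℂ)^2 * π / z by ring, habs]
    field_simp

end Stmt16Aux

end

end Stmt16AuxSection

/-- The uniform probability measure on the closed unit disk in `ℂ`:
`(1/π)` times the restriction of two-dimensional Lebesgue measure to the disk. -/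
noncomputable def unifDisk : Measure ℂ :=
  (ENNReal.ofReal Real.pi)⁻¹ • (volume.restrict {w : ℂ | ‖w‖ ≤ 1})

theorem stmt16 (z : ℂ) (hz : ‖z‖ < 1) :
    Integrable (fun w : ℂ => 1 / (z - w)) unifDisk ∧
    ∫ w, 1 / (z - w) ∂unifDisk = (starRingEnd ℂ) z := by
  have hD : {w : ℂ | ‖w‖ ≤ 1} = Metric.closedBall (0:ℂ) 1 := by
    ext w
    simp [Complex.dist_eq]
  have hInt : IntegrableOn (fun w : ℂ => 1 / (z - w)) (Metric.closedBall (0:ℂ) 1) := by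
    apply (Stmt16Aux.intOn_sub_inv z 2).mono_set
    intro w hw
    simp only [Metric.mem_closedBall, Complex.dist_eq, sub_zero] at *
    calc ‖w - z‖ ≤ ‖w‖ + ‖z‖ := by
          simpa using norm_sub_le w z
      _ ≤ 2 := by linarith [hz.le]
  have hne : (ENNReal.ofReal Real.pi)⁻¹ ≠ ⊤ := by
    simp [Real.pi_pos]
  constructor
  · rw [unifDisk, hD]
    exact hInt.smul_measure hne
  · rw [unifDisk, hD, integral_smul_measure, Stmt16Aux.main_integral z hz]
    rw [ENNReal.toReal_inv, ENNReal.toReal_ofReal Real.pi_pos.le, Complex.real_smul]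
    push_cast
    have hpi : (Real.pi : ℂ) ≠ 0 := by
      exact_mod_cast Real.pi_ne_zero
    field_simp
end

section
/- Let N be a positive integer, U ⊆ ℂ a connected open set, and z_1, …, z_N : U → ℂ holomorphic functions whose values are nonzero and pairwise distinct for each τ ∈ U and which satisfy (1/z_j(τ)) z_j'(τ) = (1/(2N)) [ 1 + ∑_{k ≠ j} (z_j(τ) + z_k(τ)) / (z_j(τ) − z_k(τ)) ] for all j and all τ ∈ U. Define q_τ(z) = ∏_{j=1}^{N} (z − z_j(τ)), a monic polynomial of degree N. Then for every τ ∈ U and every z ∈ ℂ, the complex derivative of the map τ ↦ q_τ(z) exists and equals −(1/(2N)) ( z² q_τ''(z) − (N−2) z q_τ'(z) − N q_τ(z) ), where primes denote derivatives in z. -/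
open Finset

private lemma aux_swap {M : Type*} [AddCommMonoid M] {n : ℕ} (f : Fin n → Fin n → M) :
    ∑ j, ∑ k ∈ Finset.univ.erase j, f j k = ∑ j, ∑ k ∈ Finset.univ.erase j, f k j := by
  rw [Finset.sum_comm' (s' := fun y => Finset.univ.erase y) (t' := Finset.univ)
    (fun x y => by simp [Finset.mem_erase, ne_comm])]

private lemma mainid (N : ℕ) (hN : 0 < N) (c : Fin N → ℂ)
    (hd : ∀ j k : Fin N, j ≠ k → c j ≠ c k) (w : ℂ) :
    ∑ j, c j * (1 + ∑ k ∈ Finset.univ.erase j, (c j + c k) / (c j - c k)) *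
        (∏ k ∈ Finset.univ.erase j, (w - c k))
    = w ^ 2 * (∑ j, ∑ k ∈ Finset.univ.erase j,
          ∏ l ∈ (Finset.univ.erase j).erase k, (w - c l))
      - ((N : ℂ) - 2) * w * (∑ j, ∏ k ∈ Finset.univ.erase j, (w - c k))
      - (N : ℂ) * ∏ j, (w - c j) := by
  set P : Fin N → ℂ := fun j => ∏ k ∈ Finset.univ.erase j, (w - c k) with hP
  set Q : ℂ := ∏ j, (w - c j) with hQ
  set S2 : ℂ := ∑ j, ∑ k ∈ Finset.univ.erase j,
      ∏ l ∈ (Finset.univ.erase j).erase k, (w - c l) with hS2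
  set S1 : ℂ := ∑ j, P j with hS1
  have hQP : ∀ j : Fin N, (w - c j) * P j = Q := fun j => by
    simpa using Finset.mul_prod_erase Finset.univ (fun k => w - c k) (Finset.mem_univ j)
  -- A : ∑ c j * P j = w * S1 - N * Q
  have hA : ∑ j, c j * P j = w * S1 - (N : ℂ) * Q := by
    have : ∀ j : Fin N, c j * P j = w * P j - Q := by
      intro j; rw [← hQP j]; ring
    rw [Finset.sum_congr rfl fun j _ => this j, Finset.sum_sub_distrib, ← Finset.mul_sum,
      Finset.sum_const, Finset.card_univ, Fintype.card_fin, nsmul_eq_mul]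
  -- split
  have hsplit : ∀ j : Fin N,
      c j * (1 + ∑ k ∈ Finset.univ.erase j, (c j + c k) / (c j - c k)) * P j
      = c j * P j + ∑ k ∈ Finset.univ.erase j, c j * ((c j + c k) / (c j - c k)) * P j := by
    intro j
    rw [mul_add, mul_one, add_mul, Finset.mul_sum, Finset.sum_mul]
  rw [Finset.sum_congr rfl fun j _ => hsplit j, Finset.sum_add_distrib, hA]
  set D : ℂ := ∑ j, ∑ k ∈ Finset.univ.erase j, c j * ((c j + c k) / (c j - c k)) * P j with hD
  have hpair : ∀ j : Fin N, ∀ k ∈ Finset.univ.erase j,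
      c j * ((c j + c k) / (c j - c k)) * P j + c k * ((c k + c j) / (c k - c j)) * P k
      = 2 * w ^ 2 * (∏ l ∈ (Finset.univ.erase j).erase k, (w - c l)) - w * P j - w * P k := by
    intro j k hk
    have hkj : k ≠ j := (Finset.mem_erase.1 hk).1
    have hjk : (j : Fin N) ≠ k := hkj.symm
    have hdk : c j - c k ≠ 0 := sub_ne_zero.2 (hd j k hjk)
    have hdk' : c k - c j ≠ 0 := sub_ne_zero.2 (hd k j hkj)
    set Q' : ℂ := ∏ l ∈ (Finset.univ.erase j).erase k, (w - c l) with hQ'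
    have hPj : P j = (w - c k) * Q' := by
      simpa using (Finset.mul_prod_erase (Finset.univ.erase j) (fun l => w - c l) hk).symm
    have hPk : P k = (w - c j) * Q' := by
      have hj : j ∈ Finset.univ.erase k := Finset.mem_erase.2 ⟨hjk, Finset.mem_univ j⟩
      have h := (Finset.mul_prod_erase (Finset.univ.erase k) (fun l => w - c l) hj).symm
      rw [Finset.erase_right_comm] at h
      simpa using h
    rw [hPj, hPk]
    field_simp
    ring
  have h2D : 2 * D = 2 * (w ^ 2 * S2 - ((N : ℂ) - 1) * w * S1) := by
    have hswap := aux_swap (fun j k => c j * ((c j + c k) / (c j - c k)) * P j)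
    have h2 : 2 * D = ∑ j, ∑ k ∈ Finset.univ.erase j,
        (c j * ((c j + c k) / (c j - c k)) * P j
          + c k * ((c k + c j) / (c k - c j)) * P k) := by
      simp only [Finset.sum_add_distrib]
      rw [← hswap, ← hD]
      ring
    rw [h2, Finset.sum_congr rfl fun j _ => Finset.sum_congr rfl fun k hk => hpair j k hk]
    have hcard : ∀ j : Fin N, (Finset.univ.erase j).card = N - 1 := fun j => by
      rw [Finset.card_erase_of_mem (Finset.mem_univ j), Finset.card_univ, Fintype.card_fin]
    have hN1 : ((N - 1 : ℕ) : ℂ) = (N : ℂ) - 1 := by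
      rw [Nat.cast_sub hN, Nat.cast_one]
    have e1 : ∑ j, ∑ k ∈ Finset.univ.erase j,
        (2 * w ^ 2 * (∏ l ∈ (Finset.univ.erase j).erase k, (w - c l)) - w * P j - w * P k)
        = 2 * w ^ 2 * S2 - ((N : ℂ) - 1) * w * S1 - ((N : ℂ) - 1) * w * S1 := by
      simp only [Finset.sum_sub_distrib]
      rw [aux_swap (fun j k => w * P k)]
      simp only [Finset.sum_const, hcard, nsmul_eq_mul, hN1]
      have hA2 : 2 * w ^ 2 * S2 = ∑ j, ∑ k ∈ Finset.univ.erase j,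
          2 * w ^ 2 * ∏ l ∈ (Finset.univ.erase j).erase k, (w - c l) := by
        rw [hS2, Finset.mul_sum]
        exact Finset.sum_congr rfl fun j _ => by rw [Finset.mul_sum]
      have hC : ((N : ℂ) - 1) * w * S1 = ∑ j, ((N : ℂ) - 1) * (w * P j) := by
        rw [hS1, Finset.mul_sum]
        exact Finset.sum_congr rfl fun j _ => by ring
      rw [hA2, hC]
    rw [e1]; ring
  have hDval : D = w ^ 2 * S2 - ((N : ℂ) - 1) * w * S1 :=
    mul_left_cancel₀ (two_ne_zero) h2D
  rw [hDval]; ring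

theorem stmt18 (N : ℕ) (hN : 0 < N) (U : Set ℂ) (hU : IsOpen U)
    (hconn : IsConnected U)
    (z : Fin N → ℂ → ℂ)
    (hne : ∀ τ ∈ U, ∀ j : Fin N, z j τ ≠ 0)
    (hdist : ∀ τ ∈ U, ∀ j k : Fin N, j ≠ k → z j τ ≠ z k τ)
    (hode : ∀ j : Fin N, ∀ τ ∈ U,
      HasDerivAt (z j)
        (z j τ * ((1 / (2 * (N : ℂ))) *
          (1 + ∑ k ∈ Finset.univ.erase j, (z j τ + z k τ) / (z j τ - z k τ)))) τ)
    (τ : ℂ) (hτ : τ ∈ U) (w : ℂ) :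
    HasDerivAt (fun σ => ∏ j, (w - z j σ))
      (-(1 / (2 * (N : ℂ))) *
        (w ^ 2 * deriv (deriv (fun u => ∏ j, (u - z j τ))) w
          - ((N : ℂ) - 2) * w * deriv (fun u => ∏ j, (u - z j τ)) w
          - (N : ℂ) * ∏ j, (w - z j τ))) τ := by
  classical
  set c : Fin N → ℂ := fun j => z j τ with hc
  have hd : ∀ j k : Fin N, j ≠ k → c j ≠ c k := fun j k h => hdist τ hτ j k h
  -- first derivative in u, as a function
  have hq1 : deriv (fun u => ∏ j, (u - c j))
      = fun u => ∑ j, ∏ k ∈ Finset.univ.erase j, (u - c k) := by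
    funext u
    have h := HasDerivAt.fun_finsetProd (u := Finset.univ) (f := fun j v => v - c j)
      (f' := fun _ => (1 : ℂ)) (x := u)
      (fun i _ => (hasDerivAt_id u).sub_const (c i))
    simpa using h.deriv
  have hq1w : deriv (fun u => ∏ j, (u - c j)) w
      = ∑ j, ∏ k ∈ Finset.univ.erase j, (w - c k) := by rw [hq1]
  -- second derivative at w
  have hq2 : deriv (deriv (fun u => ∏ j, (u - c j))) w
      = ∑ j, ∑ k ∈ Finset.univ.erase j,
          ∏ l ∈ (Finset.univ.erase j).erase k, (w - c l) := by
    rw [hq1]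
    have h : HasDerivAt (fun u => ∑ j, ∏ k ∈ Finset.univ.erase j, (u - c k))
        (∑ j, ∑ k ∈ Finset.univ.erase j,
          ∏ l ∈ (Finset.univ.erase j).erase k, (w - c l)) w := by
      refine HasDerivAt.fun_sum fun j _ => ?_
      have h := HasDerivAt.fun_finsetProd (u := Finset.univ.erase j) (f := fun k v => v - c k)
        (f' := fun _ => (1 : ℂ)) (x := w)
        (fun i _ => (hasDerivAt_id w).sub_const (c i))
      simpa using h
    exact h.deriv
  -- derivative in τ
  have hprod : HasDerivAt (fun σ => ∏ j, (w - z j σ))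
      (∑ j, (∏ k ∈ Finset.univ.erase j, (w - c k)) *
        (-(c j * ((1 / (2 * (N : ℂ))) *
          (1 + ∑ k ∈ Finset.univ.erase j, (c j + c k) / (c j - c k)))))) τ := by
    have h := HasDerivAt.fun_finsetProd (u := Finset.univ) (f := fun j σ => w - z j σ)
      (f' := fun j => -(c j * ((1 / (2 * (N : ℂ))) *
          (1 + ∑ k ∈ Finset.univ.erase j, (c j + c k) / (c j - c k))))) (x := τ)
      (fun j _ => (hode j τ hτ).const_sub w)
    simpa [smul_eq_mul] using h
  convert hprod using 1
  have hzc : ∀ j : Fin N, z j τ = c j := fun _ => rfl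
  simp only [hzc]
  rw [hq2, hq1w]
  rw [show (∑ j, (∏ k ∈ Finset.univ.erase j, (w - c k)) *
        (-(c j * ((1 / (2 * (N : ℂ))) *
          (1 + ∑ k ∈ Finset.univ.erase j, (c j + c k) / (c j - c k))))))
      = -(1 / (2 * (N : ℂ))) * ∑ j, c j *
          (1 + ∑ k ∈ Finset.univ.erase j, (c j + c k) / (c j - c k)) *
          (∏ k ∈ Finset.univ.erase j, (w - c k)) by
    rw [Finset.mul_sum]; exact Finset.sum_congr rfl fun j _ => by ring]
  rw [mainid N hN c hd w]
end

section
/- Let N be a positive integer, T > 0, and let z_1, …, z_N : [0, T) → ℂ be differentiable functions whose values are nonzero and pairwise distinct for each t ∈ [0, T) and which satisfy (1/z_j(t)) z_j'(t) = (1/(2N)) [ 1 + ∑_{k ≠ j} (z_j(t) + z_k(t)) / (z_j(t) − z_k(t)) ] for all j and all t ∈ [0, T). If |z_j(0)| = 1 for every j, then |z_j(t)| = e^{t/(2N)} for every j and every t ∈ [0, T); in particular, the rescaled points e^{−t/(2N)} z_j(t) remain on the unit circle for as long as the points stay distinct. -/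
open Finset

lemma re_ratio (z w : ℂ) (h : z ≠ w) :
    ((z + w) / (z - w)).re = (Complex.normSq z - Complex.normSq w) / Complex.normSq (z - w) := by
  have h0 : Complex.normSq (z - w) ≠ 0 := by
    simpa [Complex.normSq_eq_zero, sub_eq_zero] using h
  rw [Complex.div_re]
  simp only [Complex.add_re, Complex.sub_re, Complex.add_im, Complex.sub_im,
    Complex.normSq_apply]
  field_simp
  ring

lemma hasDeriv_normSq {z : ℝ → ℂ} {z' : ℂ} {s : Set ℝ} {t : ℝ}
    (hz : HasDerivWithinAt z z' s t) :
    HasDerivWithinAt (fun τ => Complex.normSq (z τ))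
      ((starRingEnd ℂ z' * z t + starRingEnd ℂ (z t) * z').re) s t := by
  have hconj : HasDerivWithinAt (fun τ => starRingEnd ℂ (z τ)) (starRingEnd ℂ z') s t := hz.star
  have hmul := hconj.mul hz
  have hre := Complex.reCLM.hasFDerivAt.comp_hasDerivWithinAt t hmul
  have hfun : (fun τ => Complex.normSq (z τ))
      = ⇑Complex.reCLM ∘ ((fun τ => starRingEnd ℂ (z τ)) * z) := by
    funext τ
    simp [Complex.normSq_apply]
  rw [hfun]
  exact hre

namespace Stmt19Aux

variable {N : ℕ} (z : Fin N → ℝ → ℂ)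

noncomputable def ff (j : Fin N) (t : ℝ) : ℝ := Complex.normSq (z j t)
noncomputable def dd (j k : Fin N) (t : ℝ) : ℝ := Complex.normSq (z j t - z k t)
noncomputable def uu (j : Fin N) (t : ℝ) : ℝ := ff z j t * Real.exp (-(t / N)) - 1
noncomputable def gg (t : ℝ) : ℝ := ∑ j, uu z j t * uu z j t

variable {z}

section

variable {T : ℝ} (hN : 0 < N)
  (hdist : ∀ t ∈ Set.Ico (0 : ℝ) T, ∀ j k : Fin N, j ≠ k → z j t ≠ z k t)
  (hode : ∀ j : Fin N, ∀ t ∈ Set.Ico (0 : ℝ) T,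
    HasDerivWithinAt (z j)
      (z j t * ((1 / (2 * (N : ℂ))) *
        (1 + ∑ k ∈ Finset.univ.erase j, (z j t + z k t) / (z j t - z k t))))
      (Set.Ico (0 : ℝ) T) t)

include hN hdist hode

lemma hasDeriv_ff (j : Fin N) {t : ℝ} (ht : t ∈ Set.Ico (0 : ℝ) T) :
    HasDerivWithinAt (ff z j)
      (ff z j t / N * (1 + ∑ k ∈ Finset.univ.erase j, (ff z j t - ff z k t) / dd z j k t))
      (Set.Ico (0 : ℝ) T) t := by
  have hNR : (N : ℝ) ≠ 0 := Nat.cast_ne_zero.mpr hN.ne'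
  set c : ℂ := (1 / (2 * (N : ℂ))) *
      (1 + ∑ k ∈ Finset.univ.erase j, (z j t + z k t) / (z j t - z k t)) with hc
  have h := hasDeriv_normSq (hode j t ht)
  have hval : (starRingEnd ℂ (z j t * c) * z j t + starRingEnd ℂ (z j t) * (z j t * c)).re
      = Complex.normSq (z j t) * (2 * c.re) := by
    have h1 : starRingEnd ℂ (z j t * c) * z j t + starRingEnd ℂ (z j t) * (z j t * c)
        = (Complex.normSq (z j t) : ℂ) * (starRingEnd ℂ c + c) := by
      rw [map_mul, Complex.normSq_eq_conj_mul_self]; ring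
    rw [h1, Complex.re_ofReal_mul]
    congr 1
    simp [Complex.add_re, Complex.conj_re]; ring
  have hcre : c.re = 1 / (2 * (N : ℝ)) *
      (1 + ∑ k ∈ Finset.univ.erase j, (ff z j t - ff z k t) / dd z j k t) := by
    have h1 : (1 / (2 * (N : ℂ))) = (((1 / (2 * (N : ℝ))) : ℝ) : ℂ) := by push_cast; ring
    rw [hc, h1, Complex.re_ofReal_mul]
    congr 1
    rw [Complex.add_re, Complex.one_re, Complex.re_sum]
    congr 1
    refine Finset.sum_congr rfl fun k hk => ?_
    have hjk : j ≠ k := (Finset.ne_of_mem_erase hk).symm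
    exact re_ratio _ _ (hdist t ht j k hjk)
  rw [hval, hcre] at h
  have : Complex.normSq (z j t) * (2 * (1 / (2 * (N : ℝ)) *
      (1 + ∑ k ∈ Finset.univ.erase j, (ff z j t - ff z k t) / dd z j k t)))
      = ff z j t / N * (1 + ∑ k ∈ Finset.univ.erase j, (ff z j t - ff z k t) / dd z j k t) := by
    rw [ff]; field_simp
  rw [this] at h
  exact h

lemma hasDeriv_uu (j : Fin N) {t : ℝ} (ht : t ∈ Set.Ico (0 : ℝ) T) :
    HasDerivWithinAt (uu z j)
      (ff z j t / N * (∑ k ∈ Finset.univ.erase j, (uu z j t - uu z k t) / dd z j k t))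
      (Set.Ico (0 : ℝ) T) t := by
  have hNR : (N : ℝ) ≠ 0 := Nat.cast_ne_zero.mpr hN.ne'
  have hexp : HasDerivAt (fun τ : ℝ => Real.exp (-(τ / N)))
      (Real.exp (-(t / N)) * (-(1 / N))) t := by
    have h1 : HasDerivAt (fun τ : ℝ => -(τ / N)) (-(1 / N)) t := by
      simpa using ((hasDerivAt_id t).div_const (N : ℝ)).fun_neg
    exact h1.exp
  have h := ((hasDeriv_ff hN hdist hode j ht).mul
    (hexp.hasDerivWithinAt)).sub_const 1
  have heq : ff z j t / N * (1 + ∑ k ∈ Finset.univ.erase j, (ff z j t - ff z k t) / dd z j k t)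
        * Real.exp (-(t / N)) + ff z j t * (Real.exp (-(t / N)) * (-(1 / N)))
      = ff z j t / N * (∑ k ∈ Finset.univ.erase j, (uu z j t - uu z k t) / dd z j k t) := by
    have hsum : (∑ k ∈ Finset.univ.erase j, (uu z j t - uu z k t) / dd z j k t)
        = Real.exp (-(t / N)) * ∑ k ∈ Finset.univ.erase j, (ff z j t - ff z k t) / dd z j k t := by
      rw [Finset.mul_sum]
      refine Finset.sum_congr rfl fun k hk => ?_
      simp only [uu]
      ring
    rw [hsum]
    field_simp
    ring
  rw [heq] at h
  exact h

lemma hasDeriv_gg {t : ℝ} (ht : t ∈ Set.Ico (0 : ℝ) T) :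
    HasDerivWithinAt (gg z)
      (∑ j, (2 * uu z j t) * (ff z j t / N *
        (∑ k ∈ Finset.univ.erase j, (uu z j t - uu z k t) / dd z j k t)))
      (Set.Ico (0 : ℝ) T) t := by
  have h : HasDerivWithinAt (gg z)
      (∑ j, (ff z j t / N * (∑ k ∈ Finset.univ.erase j, (uu z j t - uu z k t) / dd z j k t)
        * uu z j t + uu z j t * (ff z j t / N *
        (∑ k ∈ Finset.univ.erase j, (uu z j t - uu z k t) / dd z j k t))))
      (Set.Ico (0 : ℝ) T) t := by
    apply HasDerivWithinAt.fun_sum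
    intro j _
    exact (hasDeriv_uu hN hdist hode j ht).mul (hasDeriv_uu hN hdist hode j ht)
  convert h using 1
  refine Finset.sum_congr rfl fun j _ => ?_
  ring

end

end Stmt19Aux
open Stmt19Aux

theorem stmt19 (N : ℕ) (hN : 0 < N) (T : ℝ) (hT : 0 < T)
    (z : Fin N → ℝ → ℂ)
    (hne : ∀ t ∈ Set.Ico (0 : ℝ) T, ∀ j : Fin N, z j t ≠ 0)
    (hdist : ∀ t ∈ Set.Ico (0 : ℝ) T, ∀ j k : Fin N, j ≠ k → z j t ≠ z k t)
    (hode : ∀ j : Fin N, ∀ t ∈ Set.Ico (0 : ℝ) T,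
      HasDerivWithinAt (z j)
        (z j t * ((1 / (2 * (N : ℂ))) *
          (1 + ∑ k ∈ Finset.univ.erase j, (z j t + z k t) / (z j t - z k t))))
        (Set.Ico (0 : ℝ) T) t)
    (hinit : ∀ j : Fin N, ‖z j 0‖ = 1) :
    ∀ j : Fin N, ∀ t ∈ Set.Ico (0 : ℝ) T,
      ‖z j t‖ = Real.exp (t / (2 * N)) := by
  classical
  intro j₀ t₀ ht₀
  obtain ⟨ht00, ht0T⟩ := ht₀
  have hNR : (N : ℝ) ≠ 0 := Nat.cast_ne_zero.mpr hN.ne'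
  have hNpos : (0 : ℝ) < N := Nat.cast_pos.mpr hN
  have hsub : Set.Icc (0 : ℝ) t₀ ⊆ Set.Ico (0 : ℝ) T :=
    fun x hx => ⟨hx.1, lt_of_le_of_lt hx.2 ht0T⟩
  have hsub' : Set.Ico (0 : ℝ) t₀ ⊆ Set.Icc (0 : ℝ) t₀ := Set.Ico_subset_Icc_self
  -- continuity facts
  have hzc : ∀ j, ContinuousOn (z j) (Set.Ico (0 : ℝ) T) :=
    fun j x hx => (hode j x hx).continuousWithinAt
  have hfc : ∀ j, ContinuousOn (ff z j) (Set.Ico (0 : ℝ) T) :=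
    fun j => Complex.continuous_normSq.comp_continuousOn (hzc j)
  have hdc : ∀ j k, ContinuousOn (dd z j k) (Set.Ico (0 : ℝ) T) :=
    fun j k => Complex.continuous_normSq.comp_continuousOn ((hzc j).sub (hzc k))
  have hdpos : ∀ j k, j ≠ k → ∀ x ∈ Set.Ico (0 : ℝ) T, 0 < dd z j k x := by
    intro j k hjk x hx
    exact Complex.normSq_pos.mpr (sub_ne_zero.mpr (hdist x hx j k hjk))
  have hf_nonneg : ∀ j x, 0 ≤ ff z j x := fun j x => Complex.normSq_nonneg _
  -- the bound function
  set C : ℝ → ℝ := fun x => ∑ j, ∑ k ∈ Finset.univ.erase j,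
      4 * ff z j x / ((N : ℝ) * dd z j k x) with hCdef
  have hCc : ContinuousOn C (Set.Icc 0 t₀) := by
    apply continuousOn_finset_sum
    intro j _
    apply continuousOn_finset_sum
    intro k hk
    have hjk : j ≠ k := (Finset.ne_of_mem_erase hk).symm
    apply ContinuousOn.div
    · exact continuousOn_const.mul ((hfc j).mono hsub)
    · exact continuousOn_const.mul ((hdc j k).mono hsub)
    · intro x hx
      exact mul_ne_zero hNR (hdpos j k hjk x (hsub hx)).ne'
  obtain ⟨K, hK⟩ := isCompact_Icc.exists_bound_of_continuousOn hCc
  -- basic facts about g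
  have hg_nonneg : ∀ x, 0 ≤ gg z x :=
    fun x => Finset.sum_nonneg fun j _ => mul_self_nonneg _
  have hterm : ∀ j x, uu z j x * uu z j x ≤ gg z x :=
    fun j x => Finset.single_le_sum (fun i _ => mul_self_nonneg (uu z i x)) (mem_univ j)
  -- derivative of g within Ici x
  set G' : ℝ → ℝ := fun x => ∑ j, (2 * uu z j x) * (ff z j x / N *
      (∑ k ∈ Finset.univ.erase j, (uu z j x - uu z k x) / dd z j k x)) with hG'def
  have hg'Ici : ∀ x ∈ Set.Ico 0 t₀, HasDerivWithinAt (gg z) (G' x) (Set.Ici x) x := by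
    intro x hx
    have hxT : x ∈ Set.Ico (0 : ℝ) T := hsub (hsub' hx)
    have hmem : Set.Ico (0 : ℝ) T ∈ nhdsWithin x (Set.Ici x) := by
      have h1 : Set.Ici x ∩ Set.Iio T ∈ nhdsWithin x (Set.Ici x) :=
        inter_mem_nhdsWithin _ (Iio_mem_nhds hxT.2)
      exact Filter.mem_of_superset h1 fun y hy => ⟨le_trans hxT.1 hy.1, hy.2⟩
    exact (hasDeriv_gg hN hdist hode hxT).mono_of_mem_nhdsWithin hmem
  -- pointwise bound
  have hbound : ∀ x ∈ Set.Ico 0 t₀, G' x ≤ K * gg z x + 0 := by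
    intro x hx
    rw [add_zero]
    have hxT : x ∈ Set.Ico (0 : ℝ) T := hsub (hsub' hx)
    have step1 : G' x ≤ C x * gg z x := by
      have hexp : C x * gg z x = ∑ j, ∑ k ∈ Finset.univ.erase j,
          (4 * ff z j x / ((N : ℝ) * dd z j k x)) * gg z x := by
        rw [hCdef]; rw [Finset.sum_mul]
        exact Finset.sum_congr rfl fun j _ => Finset.sum_mul _ _ _
      have hexp2 : G' x = ∑ j, ∑ k ∈ Finset.univ.erase j,
          (2 * uu z j x) * (ff z j x / N * ((uu z j x - uu z k x) / dd z j k x)) := by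
        refine Finset.sum_congr rfl fun j _ => ?_
        rw [Finset.mul_sum, Finset.mul_sum]
      rw [hexp, hexp2]
      refine Finset.sum_le_sum fun j _ => Finset.sum_le_sum fun k hk => ?_
      have hjk : j ≠ k := (Finset.ne_of_mem_erase hk).symm
      have hd : 0 < dd z j k x := hdpos j k hjk x hxT
      have hcoef : 0 ≤ ff z j x / ((N : ℝ) * dd z j k x) :=
        div_nonneg (hf_nonneg j x) (mul_nonneg hNpos.le hd.le)
      have h1 : (2 * uu z j x) * (ff z j x / N * ((uu z j x - uu z k x) / dd z j k x))
          = ff z j x / ((N : ℝ) * dd z j k x) * (2 * uu z j x * (uu z j x - uu z k x)) := by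
        field_simp
      have h2 : (4 * ff z j x / ((N : ℝ) * dd z j k x)) * gg z x
          = ff z j x / ((N : ℝ) * dd z j k x) * (4 * gg z x) := by ring
      rw [h1, h2]
      refine mul_le_mul_of_nonneg_left ?_ hcoef
      nlinarith [sq_nonneg (uu z j x + uu z k x), hterm j x, hterm k x]
    refine step1.trans ?_
    refine mul_le_mul_of_nonneg_right ?_ (hg_nonneg x)
    exact (le_abs_self _).trans (by simpa using hK x (hsub' hx))
  -- continuity of g on [0, t₀]
  have hgc : ContinuousOn (gg z) (Set.Icc 0 t₀) := by
    intro x hx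
    exact ((hasDeriv_gg hN hdist hode (hsub hx)).continuousWithinAt).mono hsub
  -- initial value
  have hg0 : gg z 0 = 0 := by
    apply Finset.sum_eq_zero
    intro j _
    have h1 : Complex.normSq (z j 0) = 1 := by
      rw [Complex.normSq_eq_norm_sq, hinit j]; norm_num
    simp [uu, ff, h1]
  -- Grönwall
  have key := le_gronwallBound_of_liminf_deriv_right_le (f := gg z) (f' := G')
    (δ := 0) (K := K) (ε := 0) (a := 0) (b := t₀) hgc
    (fun x hx r hr => by
      have h := (hg'Ici x hx).liminf_right_slope_le hr
      refine h.mono fun y hy => ?_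
      rwa [slope_def_field, div_eq_inv_mul] at hy)
    (le_of_eq hg0) hbound t₀ ⟨ht00, le_refl t₀⟩
  rw [sub_zero, gronwallBound_ε0_δ0] at key
  have hgz : gg z t₀ = 0 := le_antisymm key (hg_nonneg t₀)
  have huj : uu z j₀ t₀ = 0 := by
    have h := (Finset.sum_eq_zero_iff_of_nonneg
      (fun j _ => mul_self_nonneg (uu z j t₀))).mp hgz j₀ (mem_univ _)
    exact mul_self_eq_zero.mp h
  have hmul1 : Complex.normSq (z j₀ t₀) * Real.exp (-(t₀ / N)) = 1 := by
    have := huj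
    simp only [uu, ff, sub_eq_zero] at this
    exact this
  have hemul : Real.exp (-(t₀ / N)) * Real.exp (t₀ / N) = 1 := by
    rw [← Real.exp_add]; simp
  have hfj : Complex.normSq (z j₀ t₀) = Real.exp (t₀ / N) := by
    calc Complex.normSq (z j₀ t₀)
        = Complex.normSq (z j₀ t₀) * Real.exp (-(t₀ / N)) * Real.exp (t₀ / N) := by
          rw [mul_assoc, hemul, mul_one]
      _ = Real.exp (t₀ / N) := by rw [hmul1, one_mul]
  rw [Complex.norm_def, hfj,
    show t₀ / (N : ℝ) = t₀ / (2 * N) + t₀ / (2 * N) by field_simp; ring,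
    Real.exp_add]
  exact Real.sqrt_mul_self (Real.exp_nonneg _)
end
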